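/- arXiv:2406.07468 — 5 statements merged into one kernel-verified Lean document; each statement's English description precedes it below -/
import Mathlib

section
/- Let q = 2^n and let G : 𝔽_q → 𝔽_q be the power function G(x) = x^d for some positive integer d. If G is not APN, then 9(q−1) ≤ APN-def(G) ≤ (1/4)(q² + 4q + 4)(q−1) (equivalently, 36(q−1) ≤ 4·APN-def(G) and 4·APN-def(G) ≤ (q² + 4q + 4)(q−1)). -/
namespace APNPaper

open Finset

variable {F : Type*} [Field F] [Fintype F] [DecidableEq F]

/-- `δ_G(a,b)`: the number of `x` with `D_aG(x) = G(x) + G(x+a) = b`. -/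
def delta (G : F → F) (a b : F) : ℕ :=
  (Finset.univ.filter fun x : F => G x + G (x + a) = b).card

/-- `∇_G(a,x) = δ_G(a, D_aG(x))`. -/
def nabla (G : F → F) (a x : F) : ℕ := delta G a (G x + G (x + a))

/-- `G` is almost perfect nonlinear. -/
def IsAPN (G : F → F) : Prop := ∀ a : F, a ≠ 0 → ∀ b : F, delta G a b ≤ 2

/-- The derivative `D_aG` is 2-to-1, i.e. `G` satisfies property `(p_a)`. -/
def TwoToOne (G : F → F) (a : F) : Prop :=
  ∀ b : F, delta G a b = 0 ∨ delta G a b = 2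

instance instDecTwoToOne (G : F → F) (a : F) : Decidable (TwoToOne G a) := by
  unfold TwoToOne; infer_instance

/-- The row spectrum `R-Spec_q(G)`. -/
def RSpec (G : F → F) : Finset F :=
  (Finset.univ.erase (0 : F)).filter fun a => TwoToOne G a

/-- `S_a = {x : ∇_G(a,x) = 2}`. -/
def Sset (G : F → F) (a : F) : Finset F :=
  Finset.univ.filter fun x : F => nabla G a x = 2

/-- `w_{S_a^c} = Σ_{b : δ_G(a,b) > 2} (δ_G(a,b)/2)²`. -/
def wS (G : F → F) (a : F) : ℤ :=
  ∑ b : F, if 2 < delta G a b then ((delta G a b / 2 : ℕ) : ℤ) ^ 2 else 0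

/-- `χ_a = 1` if `S_a = 𝔽_q`, and `0` otherwise. -/
def chi (G : F → F) (a : F) : ℤ :=
  if Sset G a = Finset.univ then 1 else 0

/-- `𝒟(G) = Σ_{a ≠ 0} (|S_a| − w_{S_a^c} + χ_a)`. -/
def Dscr (G : F → F) : ℤ :=
  ∑ a ∈ Finset.univ.erase (0 : F), (((Sset G a).card : ℤ) - wS G a + chi G a)

/-- The APN-defect `APN-def(G) = q² − 1 − 𝒟(G)`. -/
def APNdef (G : F → F) : ℤ := (Fintype.card F : ℤ) ^ 2 - 1 - Dscr G

/-- The differential uniformity `δ_G`. -/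
def diffUnif (G : F → F) : ℕ :=
  ((Finset.univ.erase (0 : F)) ×ˢ Finset.univ).sup fun p => delta G p.1 p.2

/-- The set of vanishing flats of `G`. -/
def VF (G : F → F) : Set (Finset F) :=
  {S | ∃ x y z : F, x ≠ y ∧ x ≠ z ∧ y ≠ z ∧
    G x + G y + G z + G (x + y + z) = 0 ∧ S = ({x, y, z, x + y + z} : Finset F)}

/-- The absolute trace `Tr(z) = z + z² + ⋯ + z^{2^{n-1}}` (with values in `{0,1} ⊆ F`). -/
def Tr (n : ℕ) (z : F) : F := ∑ i ∈ Finset.range n, z ^ (2 ^ i)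

/-- The modification `F_{0,α}` of the inverse function: the values of the inverse
function at `0` and `α` are swapped. -/
def Fmod (α : F) : F → F :=
  fun x => if x = 0 then α⁻¹ else if x = α then 0 else x⁻¹

/-! ### Auxiliary lemmas -/

/-- A finset closed under a fixed-point-free involution has even cardinality. -/
lemma even_card_of_invol {α : Type*} [DecidableEq α] (σ : α → α)
    (hσ2 : ∀ x, σ (σ x) = x) (hσne : ∀ x, σ x ≠ x) :
    ∀ s : Finset α, (∀ x ∈ s, σ x ∈ s) → Even s.card := by
  intro s
  induction s using Finset.strongInduction with
  | _ s ih =>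
    intro hmem
    rcases s.eq_empty_or_nonempty with rfl | ⟨x, hx⟩
    · simp
    · have hσx : σ x ∈ s := hmem x hx
      have hne : σ x ≠ x := hσne x
      have hxt : x ∉ (s.erase x).erase (σ x) := by simp
      have hss : (s.erase x).erase (σ x) ⊆ s :=
        (Finset.erase_subset _ _).trans (Finset.erase_subset _ _)
      have hsub : (s.erase x).erase (σ x) ⊂ s :=
        (Finset.ssubset_iff_of_subset hss).mpr ⟨x, hx, hxt⟩
      have hclosed : ∀ y ∈ (s.erase x).erase (σ x), σ y ∈ (s.erase x).erase (σ x) := by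
        intro y hy
        simp only [Finset.mem_erase] at hy ⊢
        refine ⟨fun h => hy.2.1 ?_, fun h => hy.1 ?_, hmem y hy.2.2⟩
        · rw [← hσ2 y, h, hσ2]
        · rw [← hσ2 y, h]
      have hcard : ((s.erase x).erase (σ x)).card = s.card - 2 := by
        rw [Finset.card_erase_of_mem (Finset.mem_erase.mpr ⟨hne, hσx⟩),
          Finset.card_erase_of_mem hx]
        omega
      have h2 : 2 ≤ s.card := by
        have := Finset.one_lt_card.mpr ⟨σ x, hσx, x, hx, hne⟩; omega
      have heven := ih _ hsub hclosed
      rw [hcard] at heven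
      rw [Nat.even_iff] at heven ⊢
      omega

section Power

variable {d : ℕ} {G : F → F}

lemma key_calc (hG : ∀ x : F, G x = x ^ d) (a x : F) :
    G (a * x) + G (a * x + a) = a ^ d * (G x + G (x + 1)) := by
  have h : a * x + a = a * (x + 1) := by ring
  rw [hG, hG, hG, hG, h, mul_pow, mul_pow, mul_add]

lemma delta_smul (hG : ∀ x : F, G x = x ^ d) {a : F} (ha : a ≠ 0) (b : F) :
    delta G a (a ^ d * b) = delta G 1 b := by
  have had : a ^ d ≠ 0 := pow_ne_zero d ha
  unfold delta
  have himg : (Finset.univ.filter fun x : F => G x + G (x + a) = a ^ d * b)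
      = (Finset.univ.filter fun x : F => G x + G (x + 1) = b).image (fun x => a * x) := by
    ext y
    simp only [Finset.mem_image, Finset.mem_filter, Finset.mem_univ, true_and]
    constructor
    · intro hy
      refine ⟨a⁻¹ * y, ?_, by field_simp⟩
      have hy' : a * (a⁻¹ * y) = y := by field_simp
      have := key_calc hG a (a⁻¹ * y)
      rw [hy'] at this
      have h2 : a ^ d * (G (a⁻¹ * y) + G (a⁻¹ * y + 1)) = a ^ d * b := by
        rw [← this, hy]
      exact mul_left_cancel₀ had h2
    · rintro ⟨x, hx, rfl⟩
      rw [key_calc hG a x, hx]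
  rw [himg, Finset.card_image_of_injective _ (mul_right_injective₀ ha)]

lemma delta_eq (hG : ∀ x : F, G x = x ^ d) {a : F} (ha : a ≠ 0) (c : F) :
    delta G a c = delta G 1 ((a ^ d)⁻¹ * c) := by
  have had : a ^ d ≠ 0 := pow_ne_zero d ha
  have := delta_smul hG ha ((a ^ d)⁻¹ * c)
  rwa [mul_inv_cancel_left₀ had] at this

lemma nabla_smul (hG : ∀ x : F, G x = x ^ d) {a : F} (ha : a ≠ 0) (x : F) :
    nabla G a (a * x) = nabla G 1 x := by
  unfold nabla
  rw [key_calc hG a x, delta_smul hG ha]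

lemma mem_Sset_smul (hG : ∀ x : F, G x = x ^ d) {a : F} (ha : a ≠ 0) (x : F) :
    a * x ∈ Sset G a ↔ x ∈ Sset G 1 := by
  simp [Sset, nabla_smul hG ha]

lemma Sset_eq_image (hG : ∀ x : F, G x = x ^ d) {a : F} (ha : a ≠ 0) :
    Sset G a = (Sset G 1).image (fun x => a * x) := by
  ext y
  simp only [Finset.mem_image]
  constructor
  · intro hy
    refine ⟨a⁻¹ * y, ?_, by field_simp⟩
    have hy' : a * (a⁻¹ * y) = y := by field_simp
    rw [← mem_Sset_smul hG ha, hy']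
    exact hy
  · rintro ⟨x, hx, rfl⟩
    exact (mem_Sset_smul hG ha x).mpr hx

lemma Sset_card_eq (hG : ∀ x : F, G x = x ^ d) {a : F} (ha : a ≠ 0) :
    (Sset G a).card = (Sset G 1).card := by
  rw [Sset_eq_image hG ha, Finset.card_image_of_injective _ (mul_right_injective₀ ha)]

lemma Sset_univ_iff (hG : ∀ x : F, G x = x ^ d) {a : F} (ha : a ≠ 0) :
    Sset G a = Finset.univ ↔ Sset G 1 = Finset.univ := by
  constructor <;> intro h <;> rw [Finset.eq_univ_iff_forall] <;> intro y
  · rw [← mem_Sset_smul hG ha, h]; exact Finset.mem_univ _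
  · have hy' : a * (a⁻¹ * y) = y := by field_simp
    rw [← hy', mem_Sset_smul hG ha, h]
    exact Finset.mem_univ _

lemma chi_eq (hG : ∀ x : F, G x = x ^ d) {a : F} (ha : a ≠ 0) :
    chi G a = chi G 1 := by
  unfold chi
  simp only [Sset_univ_iff hG ha]

lemma wS_eq (hG : ∀ x : F, G x = x ^ d) {a : F} (ha : a ≠ 0) :
    wS G a = wS G 1 := by
  have had : a ^ d ≠ 0 := pow_ne_zero d ha
  unfold wS
  refine (Fintype.sum_equiv (Equiv.mulLeft₀ (a ^ d) had)
    (fun b => if 2 < delta G 1 b then ((delta G 1 b / 2 : ℕ) : ℤ) ^ 2 else 0)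
    (fun b => if 2 < delta G a b then ((delta G a b / 2 : ℕ) : ℤ) ^ 2 else 0) ?_).symm
  intro b
  simp only [Equiv.mulLeft₀_apply, delta_smul hG ha]

end Power

/-- `Hfun j` : contribution to the defect of a fiber of size `2j`. -/
def Hfun (j : ℕ) : ℤ :=
  2 * j - (if j = 1 then 2 else 0) + (if 1 < j then (j : ℤ) ^ 2 else 0)

lemma Hfun_nonneg (j : ℕ) : 0 ≤ Hfun j := by
  unfold Hfun
  rcases j with _ | _ | j
  · norm_num
  · norm_num
  · rw [if_neg (by omega), if_pos (by omega)]
    push_cast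
    nlinarith [sq_nonneg ((j : ℤ) + 2)]

lemma Hfun_lower {j : ℕ} (hj : 2 ≤ j) : 8 ≤ Hfun j := by
  unfold Hfun
  rw [if_neg (by omega), if_pos (by omega)]
  have h2 : (2 : ℤ) ≤ (j : ℤ) := by exact_mod_cast hj
  nlinarith

lemma Hfun_upper {j q : ℕ} (hq : 2 * j ≤ q) : 2 * Hfun j ≤ (j : ℤ) * ((q : ℤ) + 4) := by
  unfold Hfun
  rcases j with _ | _ | j
  · norm_num
  · norm_num
    positivity
  · rw [if_neg (by omega), if_pos (by omega)]
    have h2 : 2 * ((j : ℤ) + 2) ≤ (q : ℤ) := by exact_mod_cast hq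
    push_cast
    nlinarith

section MainOne

variable {d : ℕ} {G : F → F}

lemma main_one [CharP F 2] (hG : ∀ x : F, G x = x ^ d)
    (hbad : ∃ b : F, 2 < delta G 1 b) :
    (((Sset G 1).card : ℤ) - wS G 1 + chi G 1) ≤ (Fintype.card F : ℤ) - 8 ∧
    4 * ((Fintype.card F : ℤ) + 1 - (((Sset G 1).card : ℤ) - wS G 1 + chi G 1))
      ≤ (Fintype.card F : ℤ) ^ 2 + 4 * (Fintype.card F : ℤ) + 4 := by
  have h2F : (2 : F) = 0 := by exact_mod_cast CharP.cast_eq_zero F 2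
  have hone : (1 : F) + 1 = 0 := by rw [one_add_one_eq_two, h2F]
  have hσ2 : ∀ x : F, (x + 1) + 1 = x := fun x => by rw [add_assoc, hone, add_zero]
  have hσne : ∀ x : F, x + 1 ≠ x := by
    intro x h
    exact one_ne_zero (by rwa [add_eq_left] at h)
  have hDper : ∀ x : F, G (x + 1) + G (x + 1 + 1) = G x + G (x + 1) := by
    intro x
    rw [hσ2 x, add_comm]
  -- all fibers have even cardinality
  have heven : ∀ b : F, Even (delta G 1 b) := by
    intro b
    apply even_card_of_invol (fun x => x + 1) hσ2 hσne
    intro x hx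
    simp only [Finset.mem_filter, Finset.mem_univ, true_and] at hx ⊢
    rw [hDper x]
    exact hx
  choose jf hjf using heven
  have h2j : ∀ b : F, delta G 1 b = 2 * jf b := fun b => by rw [hjf b]; ring
  -- the fibers partition the field
  have q_eq : ∑ b : F, delta G 1 b = Fintype.card F := by
    rw [← Finset.card_univ]
    exact (Finset.card_eq_sum_card_fiberwise
      (f := fun x : F => G x + G (x + 1)) (t := Finset.univ)
      (fun x _ => Finset.mem_univ _)).symm
  -- cardinality of S₁ fiberwise
  have Scard_eq : (Sset G 1).card = ∑ b : F, if delta G 1 b = 2 then 2 else 0 := by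
    have h1 : (Sset G 1).card
        = ∑ b : F, ((Sset G 1).filter fun x => G x + G (x + 1) = b).card :=
      Finset.card_eq_sum_card_fiberwise (fun x _ => Finset.mem_univ _)
    rw [h1]
    refine Finset.sum_congr rfl fun b _ => ?_
    by_cases hb : delta G 1 b = 2
    · rw [if_pos hb, ← hb]
      have hset : (Sset G 1).filter (fun x => G x + G (x + 1) = b)
          = Finset.univ.filter (fun x => G x + G (x + 1) = b) := by
        ext x
        simp only [Sset, Finset.mem_filter, Finset.mem_univ, true_and]; simp only [nabla]
        constructor
        · exact fun h => h.2
        · intro h; exact ⟨by rw [h]; exact hb, h⟩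
      rw [hset]
      rfl
    · rw [if_neg hb, Finset.card_eq_zero, Finset.filter_eq_empty_iff]
      intro x hx
      simp only [Sset, Finset.mem_filter, Finset.mem_univ, true_and] at hx; simp only [nabla] at hx
      intro hxb
      exact hb (by rw [← hxb]; exact hx)
  -- per-fiber contribution
  have hterm : ∀ b : F,
      (delta G 1 b : ℤ) - (if delta G 1 b = 2 then 2 else 0)
        + (if 2 < delta G 1 b then ((delta G 1 b / 2 : ℕ) : ℤ) ^ 2 else 0)
      = Hfun (jf b) := by
    intro b
    have hk := h2j b
    rw [if_congr (show delta G 1 b = 2 ↔ jf b = 1 by omega) rfl rfl,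
      if_congr (show 2 < delta G 1 b ↔ 1 < jf b by omega) rfl rfl,
      (show delta G 1 b / 2 = jf b by omega), hk]
    unfold Hfun
    push_cast
    ring
  have hq' : (Fintype.card F : ℤ) = ∑ b : F, (delta G 1 b : ℤ) := by
    rw [← q_eq]; push_cast; rfl
  have hS' : ((Sset G 1).card : ℤ) = ∑ b : F, (if delta G 1 b = 2 then 2 else 0 : ℤ) := by
    rw [Scard_eq]; push_cast; rfl
  have total : (Fintype.card F : ℤ) - ((Sset G 1).card : ℤ) + wS G 1
      = ∑ b : F, Hfun (jf b) := by
    have hsum : ∑ b : F, Hfun (jf b)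
        = ∑ b : F, ((delta G 1 b : ℤ) - (if delta G 1 b = 2 then 2 else 0)
          + (if 2 < delta G 1 b then ((delta G 1 b / 2 : ℕ) : ℤ) ^ 2 else 0)) :=
      Finset.sum_congr rfl fun b _ => (hterm b).symm
    rw [hsum, Finset.sum_add_distrib, Finset.sum_sub_distrib, hq', hS']
    unfold wS
    ring
  -- the bad fiber
  obtain ⟨b0, hb0⟩ := hbad
  have hpos : 0 < (Finset.univ.filter fun x : F => G x + G (x + 1) = b0).card := by
    have : (Finset.univ.filter fun x : F => G x + G (x + 1) = b0).card = delta G 1 b0 := rfl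
    omega
  obtain ⟨x0, hx0⟩ := Finset.card_pos.mp hpos
  have hx0' : G x0 + G (x0 + 1) = b0 := (Finset.mem_filter.mp hx0).2
  have hx0S : x0 ∉ Sset G 1 := by
    simp only [Sset, Finset.mem_filter, Finset.mem_univ, true_and]; simp only [nabla]
    rw [hx0']
    omega
  have chi0 : chi G 1 = 0 := by
    unfold chi
    rw [if_neg]
    intro h
    exact hx0S (by rw [h]; exact Finset.mem_univ x0)
  have hj0 : 2 ≤ jf b0 := by have := h2j b0; omega
  -- lower bound
  have h8 : 8 ≤ ∑ b : F, Hfun (jf b) :=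
    le_trans (Hfun_lower hj0)
      (Finset.single_le_sum (fun b _ => Hfun_nonneg (jf b)) (Finset.mem_univ b0))
  constructor
  · linarith [total, h8, chi0.ge]
  -- upper bound
  · have hble : ∀ b : F, 2 * jf b ≤ Fintype.card F := by
      intro b
      have hle : delta G 1 b ≤ ∑ b : F, delta G 1 b :=
        Finset.single_le_sum (fun i _ => Nat.zero_le _) (Finset.mem_univ b)
      rw [q_eq] at hle
      have := h2j b
      omega
    have h2A : 2 * ∑ b : F, Hfun (jf b)
        ≤ (∑ b : F, (jf b : ℤ)) * ((Fintype.card F : ℤ) + 4) := by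
      rw [Finset.mul_sum, Finset.sum_mul]
      exact Finset.sum_le_sum fun b _ => Hfun_upper (hble b)
    have hsumj : 2 * ∑ b : F, (jf b : ℤ) = (Fintype.card F : ℤ) := by
      rw [Finset.mul_sum, hq']
      exact Finset.sum_congr rfl fun b _ => by rw [h2j b]; push_cast; ring
    have h4A : 4 * ∑ b : F, Hfun (jf b)
        ≤ (Fintype.card F : ℤ) * ((Fintype.card F : ℤ) + 4) := by
      calc 4 * ∑ b : F, Hfun (jf b)
          ≤ 2 * ((∑ b : F, (jf b : ℤ)) * ((Fintype.card F : ℤ) + 4)) := by linarith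
        _ = (2 * ∑ b : F, (jf b : ℤ)) * ((Fintype.card F : ℤ) + 4) := by ring
        _ = (Fintype.card F : ℤ) * ((Fintype.card F : ℤ) + 4) := by rw [hsumj]
    nlinarith [total, chi0.ge, chi0.le, h4A]

end MainOne

/-- bounds on the APN-defect of a non-APN power function. -/
theorem stmt_0 (n d : ℕ) (hn : 0 < n) (hd : 0 < d)
    [CharP F 2] (hcard : Fintype.card F = 2 ^ n)
    (G : F → F) (hG : ∀ x : F, G x = x ^ d)
    (hnotAPN : ¬ IsAPN G) :
    36 * ((2 : ℤ) ^ n - 1) ≤ 4 * APNdef G ∧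
    4 * APNdef G ≤ (((2 : ℤ) ^ n) ^ 2 + 4 * 2 ^ n + 4) * ((2 : ℤ) ^ n - 1) := by
  -- transfer non-APN-ness to direction 1
  have hbad : ∃ b : F, 2 < delta G 1 b := by
    unfold IsAPN at hnotAPN
    push_neg at hnotAPN
    obtain ⟨a, ha, b, hab⟩ := hnotAPN
    exact ⟨(a ^ d)⁻¹ * b, by rw [← delta_eq hG ha]; omega⟩
  obtain ⟨hlow, hup⟩ := main_one hG hbad
  -- the discriminant is (q-1) times the direction-1 term
  have hD : Dscr G = ((Fintype.card F : ℤ) - 1)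
      * (((Sset G 1).card : ℤ) - wS G 1 + chi G 1) := by
    unfold Dscr
    have hcongr : ∀ a ∈ Finset.univ.erase (0 : F),
        (((Sset G a).card : ℤ) - wS G a + chi G a)
          = (((Sset G 1).card : ℤ) - wS G 1 + chi G 1) := by
      intro a ha
      have ha0 : a ≠ 0 := (Finset.mem_erase.mp ha).1
      rw [Sset_card_eq hG ha0, wS_eq hG ha0, chi_eq hG ha0]
    rw [Finset.sum_congr rfl hcongr, Finset.sum_const,
      Finset.card_erase_of_mem (Finset.mem_univ 0), Finset.card_univ, nsmul_eq_mul,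
      Nat.cast_sub Fintype.card_pos, Nat.cast_one]
  have hqpow : (Fintype.card F : ℤ) = 2 ^ n := by rw [hcard]; push_cast; ring
  set t1 : ℤ := ((Sset G 1).card : ℤ) - wS G 1 + chi G 1 with ht1
  have hAPN : APNdef G = ((2 : ℤ) ^ n - 1) * ((2 : ℤ) ^ n + 1 - t1) := by
    unfold APNdef
    rw [hD, hqpow]
    ring
  have hone : (1 : ℤ) ≤ 2 ^ n := one_le_pow₀ (by norm_num)
  rw [hqpow] at hlow hup
  constructor
  · calc 36 * ((2 : ℤ) ^ n - 1) = ((2 : ℤ) ^ n - 1) * 36 := by ring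
      _ ≤ ((2 : ℤ) ^ n - 1) * (4 * ((2 : ℤ) ^ n + 1 - t1)) :=
          mul_le_mul_of_nonneg_left (by linarith) (by linarith)
      _ = 4 * APNdef G := by rw [hAPN]; ring
  · calc 4 * APNdef G = ((2 : ℤ) ^ n - 1) * (4 * ((2 : ℤ) ^ n + 1 - t1)) := by
          rw [hAPN]; ring
      _ ≤ ((2 : ℤ) ^ n - 1) * (((2 : ℤ) ^ n) ^ 2 + 4 * 2 ^ n + 4) :=
          mul_le_mul_of_nonneg_left (by linarith) (by linarith)
      _ = (((2 : ℤ) ^ n) ^ 2 + 4 * 2 ^ n + 4) * ((2 : ℤ) ^ n - 1) := by ring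


end APNPaper
end

section
/- Let n be even, q = 2^n, and let F : 𝔽_q → 𝔽_q be the inverse function F(x) = x^{q−2}. Then APN-def(F) = 9(q−1); equivalently, 𝒟(F) = (q−1)(q−8). -/
namespace APNPaper

open Finset

variable {F : Type*} [Field F] [Fintype F] [DecidableEq F]

section Char2

variable [CharP F 2]

lemma h2 : (2 : F) = 0 := CharTwo.two_eq_zero

lemma addself (x : F) : x + x = 0 := CharTwo.add_self_eq_zero x

lemma eq_of_add_eq_zero' {x y : F} (h : x + y = 0) : x = y := by
  have := eq_neg_of_add_eq_zero_left h
  rwa [CharTwo.neg_eq] at this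

/-- The fiber of the derivative of the inverse function. -/
def fib (a b : F) : Finset F := Finset.univ.filter fun x : F => x⁻¹ + (x + a)⁻¹ = b

lemma delta_inv (a b : F) : delta (fun x : F => x⁻¹) a b = (fib a b).card := rfl

lemma key {a : F} (b : F) {x : F} (ha : a ≠ 0) (hx0 : x ≠ 0) (hxa : x ≠ a) :
    x⁻¹ + (x + a)⁻¹ = b ↔ b * x * x + a * b * x + a = 0 := by
  have hxa' : x + a ≠ 0 := fun h => hxa (eq_of_add_eq_zero' h)
  rw [inv_add_inv hx0 hxa']
  have e1 : x + (x + a) = a := by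
    rw [← add_assoc, addself, zero_add]
  rw [e1, div_eq_iff (mul_ne_zero hx0 hxa')]
  constructor
  · intro h
    linear_combination -h + a * (h2 (F := F))
  · intro h
    linear_combination -h + a * (h2 (F := F))

lemma mem_fib {a b x : F} : x ∈ fib a b ↔ x⁻¹ + (x + a)⁻¹ = b := by
  simp [fib]

lemma fib_zero {a : F} (ha : a ≠ 0) : fib a (0 : F) = ∅ := by
  ext x
  simp only [mem_fib, Finset.notMem_empty, iff_false]
  rcases eq_or_ne x 0 with rfl | hx0
  · simpa using inv_ne_zero ha
  rcases eq_or_ne x a with rfl | hxa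
  · rw [addself]
    simpa using inv_ne_zero ha
  · rw [key 0 ha hx0 hxa]
    simpa using ha

lemma mem_fib_self {a x : F} (ha : a ≠ 0) (hx : x = 0 ∨ x = a) : x ∈ fib a a⁻¹ := by
  rcases hx with rfl | rfl
  · simp [mem_fib]
  · rw [mem_fib, addself]
    simp

/-- For `b ∉ {0, a⁻¹}`, a nonempty fiber is a pair. -/
lemma fib_pair {a b x : F} (ha : a ≠ 0) (hb : b ≠ 0) (hba : b ≠ a⁻¹)
    (hx : x ∈ fib a b) : fib a b = {x, x + a} := by
  rw [mem_fib] at hx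
  have hx0 : x ≠ 0 := by
    rintro rfl
    apply hba
    rw [← hx]; simp
  have hxa : x ≠ a := by
    rintro rfl
    apply hba
    rw [← hx, addself]; simp
  have hq : b * x * x + a * b * x + a = 0 := (key b ha hx0 hxa).mp hx
  ext y
  rw [mem_fib]
  constructor
  · intro hy
    have hy0 : y ≠ 0 := by
      rintro rfl
      apply hba; rw [← hy]; simp
    have hya : y ≠ a := by
      rintro rfl
      apply hba; rw [← hy, addself]; simp
    have hqy : b * y * y + a * b * y + a = 0 := (key b ha hy0 hya).mp hy
    have hfac : b * (x + y) * (x + y + a) = 0 := by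
      linear_combination hq + hqy + (b*x*y - a) * (h2 (F := F))
    rcases mul_eq_zero.mp hfac with hfac | hfac
    · rcases mul_eq_zero.mp hfac with hfac | hfac
      · exact absurd hfac hb
      · have : x = y := eq_of_add_eq_zero' hfac
        simp [← this]
    · have : x + y = a := by
        have := eq_of_add_eq_zero' hfac
        rwa [eq_comm] at this ⊢
      have : y = x + a := by
        have h' : x + (x + y) = x + a := by rw [this]
        rwa [← add_assoc, addself, zero_add] at h'
      simp [this]
  · intro hy
    rcases Finset.mem_insert.mp hy with rfl | hy
    · exact hx
    · have hy' : y = x + a := by simpa using hy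
      subst hy'
      have h0 : x + a ≠ 0 := fun h => hxa (eq_of_add_eq_zero' h)
      have haa : x + a ≠ a := by
        intro h
        apply hx0
        have h' : x + a + a = a + a := by rw [h]
        rwa [add_assoc, addself, add_zero] at h'
      rw [key b ha h0 haa]
      linear_combination hq + (a*b*x + a*a*b) * (h2 (F := F))

variable {w : F}

lemma w_ne_zero (hw : w ^ 2 + w + 1 = 0) : w ≠ 0 := by
  rintro rfl
  simp at hw

lemma w_ne_one (hw : w ^ 2 + w + 1 = 0) : w ≠ 1 := by
  rintro rfl
  rw [one_pow] at hw
  have : (3 : F) = 0 := by linear_combination hw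
  have h1 : (1 : F) = 0 := by linear_combination this - (h2 (F := F))
  exact one_ne_zero h1

/-- The special fiber at `b = a⁻¹` has exactly four elements. -/
lemma fib_four {a : F} (ha : a ≠ 0) (hw : w ^ 2 + w + 1 = 0) :
    fib a a⁻¹ = ({0, a, a * w, a * w + a} : Finset F) := by
  ext x
  rw [mem_fib]
  rcases eq_or_ne x 0 with rfl | hx0
  · simp
  rcases eq_or_ne x a with rfl | hxa
  · rw [addself]
    simp
  rw [key a⁻¹ ha hx0 hxa]
  have hmul : a⁻¹ * x * x + a * a⁻¹ * x + a = a⁻¹ * ((x + a * w) * (x + a * w + a)) := by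
    have expand : (x + a * w) * (x + a * w + a) = x * x + a * x + a * a := by
      linear_combination a * a * hw + (a*w*x - a*a) * (h2 (F := F))
    rw [expand]
    field_simp
  rw [hmul]
  have hainv : a⁻¹ ≠ 0 := inv_ne_zero ha
  constructor
  · intro h
    rcases mul_eq_zero.mp h with h | h
    · exact absurd h hainv
    rcases mul_eq_zero.mp h with h | h
    · have : x = a * w := eq_of_add_eq_zero' h
      simp [this]
    · have : x = a * w + a := by
        have h1 : x + (a * w + a) = 0 := by rw [← h]; ring
        exact eq_of_add_eq_zero' h1
      simp [this]
  · intro h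
    simp only [Finset.mem_insert, Finset.mem_singleton] at h
    rcases h with rfl | rfl | rfl | rfl
    · exact absurd rfl hx0
    · exact absurd rfl hxa
    · linear_combination (a⁻¹ * (2*a*a*w*w + a*a*w)) * (h2 (F := F))
    · linear_combination (a⁻¹ * (2*a*a*w*w + 3*a*a*w + a*a)) * (h2 (F := F))

lemma fib_four_card {a : F} (ha : a ≠ 0) (hw : w ^ 2 + w + 1 = 0) :
    (fib a a⁻¹).card = 4 := by
  rw [fib_four ha hw]
  have hw0 : w ≠ 0 := w_ne_zero hw
  have hw1 : w ≠ 1 := w_ne_one hw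
  have h1 : a * w ≠ 0 := mul_ne_zero ha hw0
  have h2' : a * w ≠ a := by
    intro h
    apply hw1
    have := mul_left_cancel₀ ha (h.trans (mul_one a).symm)
    exact this
  have h3 : a * w + a ≠ 0 := by
    intro h
    exact h2' (eq_of_add_eq_zero' h)
  have h4 : a * w + a ≠ a := by
    intro h
    apply h1
    have h' : a * w + a + a = a + a := by rw [h]
    rwa [add_assoc, addself, add_zero] at h'
  have h5 : a * w + a ≠ a * w := by
    intro h
    apply ha
    have h' : a * w + (a * w + a) = a * w + a * w := by rw [h]
    rwa [← add_assoc, addself, zero_add] at h'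
  rw [Finset.card_insert_of_notMem, Finset.card_insert_of_notMem,
    Finset.card_insert_of_notMem, Finset.card_singleton]
  · simp [h5.symm]
  · simp [h2'.symm, (show a ≠ a * w + a from Ne.symm h4)]
  · simp [ha.symm, h1.symm, h3.symm]

/-- Every nonzero value `b ≠ a⁻¹` has fiber of size 0 or 2. -/
lemma fib_card_le_two {a b : F} (ha : a ≠ 0) (hba : b ≠ a⁻¹) :
    (fib a b).card = 0 ∨ (fib a b).card = 2 := by
  rcases eq_or_ne b 0 with rfl | hb
  · left; rw [fib_zero ha]; rfl
  rcases Finset.eq_empty_or_nonempty (fib a b) with h | ⟨x, hx⟩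
  · left; rw [h]; rfl
  · right
    rw [fib_pair ha hb hba hx]
    rw [Finset.card_insert_of_notMem, Finset.card_singleton]
    simp only [Finset.mem_singleton]
    intro h
    apply ha
    have h' : x + x = x + (x + a) := by rw [← h]
    rwa [addself, ← add_assoc, addself, zero_add, eq_comm] at h'

/-- `nabla` of the inverse function. -/
lemma nabla_inv {a x : F} (ha : a ≠ 0) (hw : w ^ 2 + w + 1 = 0) :
    nabla (fun x : F => x⁻¹) a x = if x ∈ fib a a⁻¹ then 4 else 2 := by
  have hx : x ∈ fib a (x⁻¹ + (x + a)⁻¹) := mem_fib.mpr rfl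
  split_ifs with h
  · have hb : x⁻¹ + (x + a)⁻¹ = a⁻¹ := mem_fib.mp h
    show delta (fun x : F => x⁻¹) a _ = 4
    rw [delta_inv]
    simp only [hb]
    exact fib_four_card ha hw
  · have hba : x⁻¹ + (x + a)⁻¹ ≠ a⁻¹ := fun hc => h (mem_fib.mpr hc)
    show delta (fun x : F => x⁻¹) a _ = 2
    rw [delta_inv]
    have hb : x⁻¹ + (x + a)⁻¹ ≠ 0 := by
      intro hc
      rw [hc] at hx
      rw [fib_zero ha] at hx
      exact absurd hx (Finset.notMem_empty x)
    rcases fib_card_le_two ha hba with h0 | h2'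
    · rw [Finset.card_eq_zero] at h0
      rw [h0] at hx
      exact absurd hx (Finset.notMem_empty x)
    · exact h2'

lemma Sset_inv {a : F} (ha : a ≠ 0) (hw : w ^ 2 + w + 1 = 0) :
    Sset (fun x : F => x⁻¹) a = Finset.univ \ fib a a⁻¹ := by
  ext x
  simp only [Sset, Finset.mem_filter, Finset.mem_univ, true_and, Finset.mem_sdiff]
  rw [nabla_inv ha hw]
  split_ifs with h <;> simp [h]

lemma Sset_card {a : F} (ha : a ≠ 0) (hw : w ^ 2 + w + 1 = 0) :
    (Sset (fun x : F => x⁻¹) a).card = Fintype.card F - 4 := by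
  rw [Sset_inv ha hw, Finset.card_sdiff_of_subset (Finset.subset_univ _), Finset.card_univ,
    fib_four_card ha hw]

lemma chi_inv {a : F} (ha : a ≠ 0) (hw : w ^ 2 + w + 1 = 0) :
    chi (fun x : F => x⁻¹) a = 0 := by
  rw [chi, if_neg]
  intro h
  have h0 : (0 : F) ∈ Sset (fun x : F => x⁻¹) a := h ▸ Finset.mem_univ 0
  rw [Sset_inv ha hw, Finset.mem_sdiff] at h0
  exact h0.2 (mem_fib_self ha (Or.inl rfl))

lemma wS_inv {a : F} (ha : a ≠ 0) (hw : w ^ 2 + w + 1 = 0) :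
    wS (fun x : F => x⁻¹) a = 4 := by
  rw [wS]
  rw [Finset.sum_eq_single_of_mem a⁻¹ (Finset.mem_univ _)]
  · rw [delta_inv, fib_four_card ha hw]
    norm_num
  · intro b _ hb
    rw [delta_inv]
    rcases fib_card_le_two ha hb with h | h <;> rw [h] <;> norm_num

lemma Dscr_inv (hw : w ^ 2 + w + 1 = 0) (h4 : 4 ≤ Fintype.card F) :
    Dscr (fun x : F => x⁻¹) =
      ((Fintype.card F : ℤ) - 1) * ((Fintype.card F : ℤ) - 8) := by
  rw [Dscr]
  rw [Finset.sum_congr rfl (fun a haa => by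
    have ha : a ≠ 0 := Finset.ne_of_mem_erase haa
    rw [Sset_card ha hw, wS_inv ha hw, chi_inv ha hw])]
  rw [Finset.sum_const, Finset.card_erase_of_mem (Finset.mem_univ 0), Finset.card_univ]
  have : ((Fintype.card F - 4 : ℕ) : ℤ) = (Fintype.card F : ℤ) - 4 := by
    rw [Nat.cast_sub h4]; norm_num
  rw [this]
  have hc : ((Fintype.card F - 1 : ℕ) : ℤ) = (Fintype.card F : ℤ) - 1 := by
    have h1 : 1 ≤ Fintype.card F := by omega
    push_cast [h1]
    ring
  rw [nsmul_eq_mul, hc]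
  ring

end Char2

/-- the APN-defect of the inverse function for even `n` is `9(q−1)`. -/
theorem stmt_1 (n : ℕ) (hn : 0 < n) (heven : Even n)
    [CharP F 2] (hcard : Fintype.card F = 2 ^ n) :
    APNdef (fun x : F => x ^ (2 ^ n - 2)) = 9 * ((2 : ℤ) ^ n - 1) ∧
    Dscr (fun x : F => x ^ (2 ^ n - 2)) = ((2 : ℤ) ^ n - 1) * ((2 : ℤ) ^ n - 8) := by
  -- n ≥ 2
  have hn2 : 2 ≤ n := by
    rcases heven with ⟨m, rfl⟩
    omega
  have hq4 : 4 ≤ 2 ^ n := by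
    calc (4 : ℕ) = 2 ^ 2 := rfl
    _ ≤ 2 ^ n := Nat.pow_le_pow_right (by norm_num) hn2
  -- the power function is the inverse function
  have hfun : (fun x : F => x ^ (2 ^ n - 2)) = (fun x : F => x⁻¹) := by
    funext x
    rcases eq_or_ne x 0 with rfl | hx
    · rw [zero_pow (by omega), inv_zero]
    · have h1 : x ^ (2 ^ n - 1) = 1 := by
        rw [← hcard]
        exact FiniteField.pow_card_sub_one_eq_one x hx
      have h2 : x ^ (2 ^ n - 2) * x = 1 := by
        rw [← pow_succ]
        rw [show 2 ^ n - 2 + 1 = 2 ^ n - 1 by omega]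
        exact h1
      exact eq_inv_of_mul_eq_one_left h2
  -- existence of a cube root of unity
  have hdvd : 3 ∣ 2 ^ n - 1 := by
    rcases heven with ⟨m, rfl⟩
    have h4 : 2 ^ (m + m) = 4 ^ m := by
      rw [← two_mul, pow_mul]
      norm_num
    have hmod : 4 ^ m % 3 = 1 := by
      rw [Nat.pow_mod]
      simp
    have h1 : 1 ≤ 4 ^ m := Nat.one_le_pow _ _ (by norm_num)
    rw [h4]
    omega
  have hcardu : Fintype.card Fˣ = 2 ^ n - 1 := by
    rw [Fintype.card_units, hcard]
  have hdvd' : 3 ∣ Fintype.card Fˣ := hcardu ▸ hdvd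
  obtain ⟨g, hg⟩ := exists_prime_orderOf_dvd_card 3 hdvd'
  set w : F := (g : F) with hwdef
  have hg3 : g ^ 3 = 1 := by
    rw [← hg]
    exact pow_orderOf_eq_one g
  have hw3 : w ^ 3 = 1 := by
    rw [hwdef, ← Units.val_pow_eq_pow_val, hg3, Units.val_one]
  have hwne1 : w ≠ 1 := by
    intro h
    have : g = 1 := Units.ext h
    rw [this, orderOf_one] at hg
    norm_num at hg
  have hw : w ^ 2 + w + 1 = 0 := by
    have hfac : (w + 1) * (w ^ 2 + w + 1) = 0 := by
      have : (w + 1) * (w ^ 2 + w + 1) = w ^ 3 + 1 + 2 * (w ^ 2 + w) := by ring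
      rw [this, hw3, h2 (F := F)]
      rw [zero_mul, add_zero, addself]
    rcases mul_eq_zero.mp hfac with h | h
    · exact absurd (eq_of_add_eq_zero' h) hwne1
    · exact h
  have hq4' : 4 ≤ Fintype.card F := hcard ▸ hq4
  have hD : Dscr (fun x : F => x ^ (2 ^ n - 2)) =
      ((2 : ℤ) ^ n - 1) * ((2 : ℤ) ^ n - 8) := by
    rw [hfun, Dscr_inv hw hq4', hcard]
    push_cast
    ring
  refine ⟨?_, hD⟩
  rw [APNdef, hD, hcard]
  push_cast
  ring

end APNPaper
end

section
/- Let n be even, q = 2^n, and let F : 𝔽_q → 𝔽_q be the inverse function F(x) = x^{q−2}. Let ω be a fixed element of 𝔽_4 \ 𝔽_2 regarded as an element of 𝔽_q. Then the set of vanishing flats of F is VF_F = { {0, c, cω, cω²} : c ∈ 𝔽_q^* }, and |VF_F| = (q−1)/3. -/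
namespace APNPaper

open Finset

variable {F : Type*} [Field F] [Fintype F] [DecidableEq F]

set_option linter.unusedSectionVars false
set_option linter.unusedVariables false

section Aux
variable [CharP F 2]

lemma my_addz (a b : F) : a + b = 0 ↔ a = b := by
  rw [add_eq_zero_iff_eq_neg, CharTwo.neg_eq]

lemma my_lemA (a b : F) (ha : a ≠ 0) (hb : b ≠ 0) (hab : a + b ≠ 0)
    (h : a⁻¹ + b⁻¹ + (a+b)⁻¹ = 0) : a^2 + a*b + b^2 = 0 := by
  have h2 : (2:F) = 0 := CharTwo.two_eq_zero
  field_simp at h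
  linear_combination h - a*b*h2

lemma my_lemB (x y z : F) (hx : x ≠ 0) (hy : y ≠ 0) (hz : z ≠ 0) (hw : x+y+z ≠ 0)
    (h : x⁻¹ + y⁻¹ + z⁻¹ + (x+y+z)⁻¹ = 0) : (x+y)*(y+z)*(x+z) = 0 := by
  have h2 : (2:F) = 0 := CharTwo.two_eq_zero
  field_simp at h
  linear_combination h - x*y*z*h2

lemma my_roots (ω a b : F) (hω : ω^2 = ω + 1) (ha : a ≠ 0)
    (h : a^2 + a*b + b^2 = 0) : b = a*ω ∨ b = a*ω^2 := by
  have h2 : (2:F) = 0 := CharTwo.two_eq_zero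
  have key : (b + a*ω)*(b + a*ω^2) = 0 := by
    linear_combination h + (a*b + a^2*ω + a^2)*hω + (a*b*ω + a^2*ω)*h2
  rcases mul_eq_zero.mp key with h' | h'
  · exact Or.inl ((my_addz _ _).mp h')
  · exact Or.inr ((my_addz _ _).mp h')

lemma my_flatA (ω a b : F) (hω : ω^2 = ω + 1) (ha : a ≠ 0) (hb : b ≠ 0) (hne : a ≠ b)
    (h : a⁻¹ + b⁻¹ + (a+b)⁻¹ = 0) :
    ∃ c : F, c ≠ 0 ∧ ({0, a, b, a+b} : Finset F) = {0, c, c*ω, c*ω^2} := by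
  have h2 : (2:F) = 0 := CharTwo.two_eq_zero
  have hab : a + b ≠ 0 := fun hh => hne ((my_addz _ _).mp hh)
  rcases my_roots ω a b hω ha (my_lemA a b ha hb hab h) with hb' | hb'
  · refine ⟨a, ha, ?_⟩
    have hs : a + a*ω = a*ω^2 := by linear_combination (-a)*hω
    rw [hb', hs]
  · refine ⟨a, ha, ?_⟩
    have hs : a + a*ω^2 = a*ω := by linear_combination a*hω + a*h2
    rw [hb', hs]
    ext t; simp only [Finset.mem_insert, Finset.mem_singleton]; tauto

lemma my_powInv (n : ℕ) (hcard : Fintype.card F = 2^n) (h4 : 4 ≤ 2^n) (t : F) :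
    t ^ (2^n - 2) = t⁻¹ := by
  rcases eq_or_ne t 0 with rfl | ht
  · rw [inv_zero, zero_pow (by omega)]
  · have h1 : t ^ (2^n - 1) = 1 := by
      rw [← hcard]; exact FiniteField.pow_card_sub_one_eq_one t ht
    have hm : t * t ^ (2^n - 2) = 1 := by
      rw [mul_comm, ← pow_succ, show 2^n - 2 + 1 = 2^n - 1 by omega, h1]
    exact eq_inv_of_mul_eq_one_left (by rw [mul_comm] at hm; exact hm)

end Aux

set_option maxHeartbeats 1600000 in
/-- the vanishing flats of the inverse function for even `n`. -/
theorem stmt_5 (n : ℕ) (hn : 0 < n) (heven : Even n)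
    [CharP F 2] (hcard : Fintype.card F = 2 ^ n)
    (ω : F) (hω : ω ^ 2 = ω + 1) :
    VF (fun x : F => x ^ (2 ^ n - 2)) =
      {S : Finset F | ∃ c : F, c ≠ 0 ∧ S = ({0, c, c * ω, c * ω ^ 2} : Finset F)} ∧
    3 * (VF (fun x : F => x ^ (2 ^ n - 2))).ncard = 2 ^ n - 1 := by
  have h2 : (2:F) = 0 := CharTwo.two_eq_zero
  have hn2 : 2 ≤ n := by obtain ⟨k, hk⟩ := heven; omega
  have h4 : 4 ≤ 2^n := by
    calc (4:ℕ) = 2^2 := by norm_num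
    _ ≤ 2^n := Nat.pow_le_pow_right (by norm_num) hn2
  have hpow : ∀ t : F, t ^ (2^n - 2) = t⁻¹ := my_powInv n hcard h4
  have hω0 : ω ≠ 0 := by intro h; rw [h] at hω; simp at hω
  have hω1 : ω ≠ 1 := fun h => one_ne_zero (α := F) (by rw [h] at hω; linear_combination h2 + hω)
  have hω3 : ω^3 = 1 := by linear_combination (ω+1)*hω + ω*h2
  have hω2ne1 : ω^2 ≠ 1 := fun h => hω0 (by linear_combination -h + hω + ω*h2)
  have hωω2 : ω ≠ ω^2 := fun h => one_ne_zero (α := F) (by linear_combination -hω - h)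
  have hVF : VF (fun x : F => x ^ (2 ^ n - 2)) =
      {S : Finset F | ∃ c : F, c ≠ 0 ∧ S = ({0, c, c * ω, c * ω ^ 2} : Finset F)} := by
    ext S
    constructor
    · rintro ⟨x, y, z, hxy, hxz, hyz, hsum, rfl⟩
      simp only [hpow] at hsum
      by_cases hx0 : x = 0
      · subst hx0
        simp only [inv_zero, zero_add] at hsum
        obtain ⟨c, hc, hEq⟩ := my_flatA ω y z hω (Ne.symm hxy) (Ne.symm hxz) hyz hsum
        refine ⟨c, hc, ?_⟩
        rw [← hEq]; simp only [zero_add]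
      · by_cases hy0 : y = 0
        · subst hy0
          simp only [inv_zero, add_zero] at hsum
          have hx0z : x + 0 + z = x + z := by ring
          obtain ⟨c, hc, hEq⟩ := my_flatA ω x z hω hx0 (Ne.symm hyz) hxz hsum
          refine ⟨c, hc, ?_⟩
          rw [← hEq, hx0z]
          ext t; simp only [Finset.mem_insert, Finset.mem_singleton]; tauto
        · by_cases hz0 : z = 0
          · subst hz0
            simp only [inv_zero, add_zero] at hsum
            have hxy0 : x + y + 0 = x + y := by ring
            obtain ⟨c, hc, hEq⟩ := my_flatA ω x y hω hx0 hy0 hxy hsum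
            refine ⟨c, hc, ?_⟩
            rw [← hEq, hxy0]
            ext t; simp only [Finset.mem_insert, Finset.mem_singleton]; tauto
          · by_cases hw0 : x + y + z = 0
            · have hzeq : x + y = z := (my_addz _ _).mp hw0
              rw [hw0, inv_zero, add_zero, ← hzeq] at hsum
              obtain ⟨c, hc, hEq⟩ := my_flatA ω x y hω hx0 hy0 hxy hsum
              refine ⟨c, hc, ?_⟩
              rw [← hEq, hw0, ← hzeq]
              ext t; simp only [Finset.mem_insert, Finset.mem_singleton]; tauto
            · exfalso
              have key := my_lemB x y z hx0 hy0 hz0 hw0 hsum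
              rcases mul_eq_zero.mp key with h' | h'
              · rcases mul_eq_zero.mp h' with h'' | h''
                · exact hxy ((my_addz _ _).mp h'')
                · exact hyz ((my_addz _ _).mp h'')
              · exact hxz ((my_addz _ _).mp h')
    · rintro ⟨c, hc, rfl⟩
      have key : (0:F) + c + c*ω = c*ω^2 := by linear_combination (-c)*hω
      refine ⟨0, c, c*ω, fun h => hc h.symm, fun h => (mul_ne_zero hc hω0) h.symm,
        fun h => hω1 (mul_left_cancel₀ hc (by rw [mul_one]; exact h)).symm, ?_, ?_⟩
      · have hωinv : ω⁻¹ = ω^2 := inv_eq_of_mul_eq_one_right (by linear_combination hω3)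
        have hω2inv : (ω^2)⁻¹ = ω := inv_eq_of_mul_eq_one_right (by linear_combination hω3)
        have key' : c + c*ω = c*ω^2 := by linear_combination (-c)*hω
        have h111 : (1:F) + ω + ω^2 = 0 := by linear_combination hω + (1+ω)*h2
        simp only [hpow, inv_zero, zero_add, key', mul_inv, hωinv, hω2inv]
        linear_combination c⁻¹ * h111
      · rw [key]
  refine ⟨hVF, ?_⟩
  set f : F → Finset F := fun c => ({0, c, c*ω, c*ω^2} : Finset F) with hf
  set U : Finset (Finset F) := (Finset.univ.erase (0:F)).image f with hU
  have hfω : ∀ c : F, f (c*ω) = f c := by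
    intro c
    have e1 : c*ω*ω = c*ω^2 := by ring
    have e2 : c*ω*(ω^2) = c := by linear_combination c*hω3
    simp only [hf, e1, e2]
    ext t; simp only [Finset.mem_insert, Finset.mem_singleton]; tauto
  have hfω2 : ∀ c : F, f (c*ω^2) = f c := by
    intro c
    have e1 : c*ω^2*ω = c := by linear_combination c*hω3
    have e2 : c*ω^2*(ω^2) = c*ω := by linear_combination c*ω*hω3
    simp only [hf, e1, e2]
    ext t; simp only [Finset.mem_insert, Finset.mem_singleton]; tauto
  have hcoe : VF (fun x : F => x ^ (2 ^ n - 2)) = (↑U : Set (Finset F)) := by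
    rw [hVF]
    ext S
    simp only [hU, Finset.coe_image, Set.mem_image, Finset.mem_coe, Finset.mem_erase,
      Finset.mem_univ, and_true, Set.mem_setOf_eq, eq_comm]
    exact Iff.rfl
  rw [hcoe, Set.ncard_coe_finset]
  have hcount : (Finset.univ.erase (0:F)).card = ∑ S ∈ U, 3 := by
    rw [hU, Finset.card_eq_sum_card_image f]
    apply Finset.sum_congr rfl
    intro S hS
    rw [Finset.mem_image] at hS
    obtain ⟨c, hcmem, rfl⟩ := hS
    rw [Finset.mem_erase] at hcmem
    have hc : c ≠ 0 := hcmem.1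
    have hfib : ((Finset.univ.erase (0:F)).filter fun a => f a = f c)
        = ({c, c*ω, c*ω^2} : Finset F) := by
      ext d
      simp only [Finset.mem_filter, Finset.mem_erase, Finset.mem_univ, and_true,
        true_and, Finset.mem_insert, Finset.mem_singleton]
      constructor
      · rintro ⟨hd0, hdc⟩
        have hdmem : d ∈ f d := by
          simp only [hf, Finset.mem_insert, Finset.mem_singleton]; tauto
        rw [hdc] at hdmem
        simp only [hf, Finset.mem_insert, Finset.mem_singleton] at hdmem
        tauto
      · rintro (rfl | rfl | rfl)
        · exact ⟨hc, rfl⟩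
        · exact ⟨mul_ne_zero hc hω0, hfω c⟩
        · exact ⟨mul_ne_zero hc (pow_ne_zero 2 hω0), hfω2 c⟩
    rw [hfib]
    have d1 : c ≠ c*ω := fun h => hω1 (mul_left_cancel₀ hc (by rw [mul_one]; exact h)).symm
    have d2 : c ≠ c*ω^2 := fun h => hω2ne1 (mul_left_cancel₀ hc (by rw [mul_one]; exact h)).symm
    have d3 : c*ω ≠ c*ω^2 := fun h => hωω2 (mul_left_cancel₀ hc h)
    rw [Finset.card_insert_of_notMem (by simp [d1, d2]),
      Finset.card_insert_of_notMem (by simp [d3]), Finset.card_singleton]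
  have hcard1 : (Finset.univ.erase (0:F)).card = 2^n - 1 := by
    rw [Finset.card_erase_of_mem (Finset.mem_univ 0), Finset.card_univ, hcard]
  rw [Finset.sum_const, smul_eq_mul] at hcount
  omega


end APNPaper
end

section
/- Let n ≥ 3 be odd, q = 2^n, and α ∈ 𝔽_q^*. For a ∈ 𝔽_q^* with a ≠ α and x ∈ 𝔽_q, one has ∇_{F_{0,α}}(a,x) = 4 if and only if either (i) Tr(α/(a+α)) = 0 and x ∈ {0, a, aρ, aρ + a}, where ρ ∈ 𝔽_q satisfies ρ² + ρ = α/(a+α), or (ii) Tr(α/a) = 1 and x ∈ {α, α + a, aμ, aμ + a}, where μ ∈ 𝔽_q satisfies μ² + μ = (a+α)/a; for all other x one has ∇_{F_{0,α}}(a,x) = 2. Moreover ∇_{F_{0,α}}(α,x) = 2 for all x ∈ 𝔽_q. -/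
namespace APNPaper

open Finset

variable {F : Type*} [Field F] [Fintype F] [DecidableEq F]

section Aux
set_option linter.unusedVariables false
set_option linter.unusedSectionVars false

variable [CharP F 2]

lemma Tr_add' (n : ℕ) (z w : F) : Tr n (z + w) = Tr n z + Tr n w := by
  unfold Tr
  rw [← Finset.sum_add_distrib]
  exact Finset.sum_congr rfl fun i _ => add_pow_char_pow ..

lemma Tr_AS {n : ℕ} (hcard : Fintype.card F = 2 ^ n) (z : F) : Tr n (z ^ 2 + z) = 0 := by
  have h2 : (2:F) = 0 := CharTwo.two_eq_zero
  rw [Tr_add']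
  have hsq : Tr n (z ^ 2) = ∑ i ∈ Finset.range n, z ^ (2 ^ (i+1)) := by
    unfold Tr
    refine Finset.sum_congr rfl fun i _ => ?_
    rw [← pow_mul, ← pow_succ']
  have e1 := Finset.sum_range_succ' (fun i => z ^ (2^i)) n
  have e2 := Finset.sum_range_succ (fun i => z ^ (2^i)) n
  have hq : z ^ (2^n) = z := by rw [← hcard]; exact FiniteField.pow_card z
  simp only [hq] at e2
  have key : (∑ i ∈ Finset.range n, z ^ (2 ^ (i+1))) + z ^ (2^0 : ℕ) =
      (∑ i ∈ Finset.range n, z ^ (2 ^ i)) + z := by rw [← e1, e2]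
  rw [hsq]
  unfold Tr
  linear_combination key + (∑ i ∈ Finset.range n, z ^ (2 ^ i))*h2

lemma Tr_one' {n : ℕ} (hodd : Odd n) : Tr n (1:F) = 1 := by
  have h2 : (2:F) = 0 := CharTwo.two_eq_zero
  obtain ⟨k, hk⟩ := hodd
  unfold Tr
  simp [hk]
  exact Or.inl h2

lemma Tr_exists {n : ℕ} (hcard : Fintype.card F = 2 ^ n) {z : F}
    (h : ∃ ρ : F, ρ ^ 2 + ρ = z) : Tr n z = 0 := by
  obtain ⟨ρ, hρ⟩ := h; rw [← hρ]; exact Tr_AS hcard ρ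

lemma no_omega {n : ℕ} (hcard : Fintype.card F = 2 ^ n) (hodd : Odd n) :
    ¬ ∃ ω : F, ω ^ 2 + ω = 1 := by
  intro h
  have h0 : Tr n (1:F) = 0 := Tr_exists hcard h
  rw [Tr_one' hodd] at h0
  exact one_ne_zero h0

lemma quad_roots (a x y : F) (h : y^2 + a*y = x^2 + a*x) : y = x ∨ y = x + a := by
  have h2 : (2:F) = 0 := CharTwo.two_eq_zero
  have hz : (y + x) * (y + x + a) = 0 := by
    linear_combination h + (x^2+a*x+x*y)*h2
  rcases mul_eq_zero.1 hz with h' | h'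
  · left; linear_combination h' - x*h2
  · right; linear_combination h' - (x+a)*h2

lemma add_eq_zero' (x y : F) : x + y = 0 ↔ x = y := by
  rw [add_eq_zero_iff_eq_neg, CharTwo.neg_eq]

lemma inv_sum_iff (a y b : F) (hy : y ≠ 0) (hya : y + a ≠ 0) :
    y⁻¹ + (y+a)⁻¹ = b ↔ b * (y^2 + a*y) = a := by
  have h2 : (2:F) = 0 := CharTwo.two_eq_zero
  rw [inv_add_inv hy hya, div_eq_iff (mul_ne_zero hy hya)]
  constructor <;> intro h
  · linear_combination h + (b*a*y + b*y^2 - 2*y - a)*h2 + y*h2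
  · linear_combination h + (-(a*b*y) - b*y^2 + a)*h2 + y*h2

lemma quad_shift (a t : F) : (t+a)^2 + a*(t+a) = t^2 + a*t := by
  have h2 : (2:F) = 0 := CharTwo.two_eq_zero
  linear_combination (t*a + a^2)*h2

lemma Fmod_zero (α : F) : Fmod α 0 = α⁻¹ := if_pos rfl

lemma Fmod_alpha {α : F} (hα : α ≠ 0) : Fmod α α = 0 := by
  unfold Fmod; rw [if_neg hα, if_pos rfl]

lemma Fmod_gen {α : F} (x : F) (h0 : x ≠ 0) (hx : x ≠ α) : Fmod α x = x⁻¹ := by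
  unfold Fmod; rw [if_neg h0, if_neg hx]

lemma card_four {u v w z : F} (h1 : u≠v) (h2 : u≠w) (h3 : u≠z) (h4 : v≠w) (h5 : v≠z)
    (h6 : w≠z) : ({u,v,w,z} : Finset F).card = 4 := by
  rw [Finset.card_insert_of_notMem (by simp [h1,h2,h3]),
    Finset.card_insert_of_notMem (by simp [h4,h5]), Finset.card_pair h6]

section Master

variable {α a : F}

lemma Dmaster (hα : α ≠ 0) (ha : a ≠ 0) (haα : a ≠ α) (y b : F) :
    Fmod α y + Fmod α (y + a) = b ↔
      ((y = 0 ∨ y = a) ∧ b = α⁻¹ + a⁻¹) ∨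
      ((y = α ∨ y = α + a) ∧ b = (a + α)⁻¹) ∨
      (y ≠ 0 ∧ y ≠ a ∧ y ≠ α ∧ y ≠ α + a ∧ b * (y^2 + a*y) = a) := by
  have h2 : (2:F) = 0 := CharTwo.two_eq_zero
  have hss : ∀ x : F, x + x = 0 := CharTwo.add_self_eq_zero
  have hta : a + α ≠ 0 := fun h => haα ((add_eq_zero' a α).1 h)
  have htα : α + a ≠ 0 := fun h => haα ((add_eq_zero' α a).1 h).symm
  have hαa : α ≠ a := haα.symm
  have hαaa : α + a ≠ a := fun h => hα (by linear_combination h)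
  have hαaα : α + a ≠ α := fun h => ha (by linear_combination h)
  by_cases hy0 : y = 0
  · subst hy0
    rw [zero_add, Fmod_zero, Fmod_gen a ha haα]
    constructor
    · intro h; exact Or.inl ⟨Or.inl rfl, h.symm⟩
    · rintro (⟨_, hb⟩ | ⟨hy, _⟩ | ⟨hy, _⟩)
      · exact hb.symm
      · rcases hy with h | h
        · exact absurd h.symm hα
        · exact absurd h.symm htα
      · exact absurd rfl hy
  by_cases hya : y = a
  · rw [hya]
    rw [hss a, Fmod_gen a ha haα, Fmod_zero]
    constructor
    · intro h; exact Or.inl ⟨Or.inr rfl, by rw [← h]; ring⟩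
    · rintro (⟨_, hb⟩ | ⟨hy, _⟩ | ⟨_, hy, _⟩)
      · rw [hb]; ring
      · rcases hy with h | h
        · exact absurd h haα
        · exact absurd h (fun h' => hα (by linear_combination -h'))
      · exact absurd rfl hy
  by_cases hyα : y = α
  · rw [hyα]
    rw [Fmod_alpha hα, Fmod_gen (α+a) htα hαaα, zero_add, add_comm a α]
    constructor
    · intro h; exact Or.inr (Or.inl ⟨Or.inl rfl, h.symm⟩)
    · rintro (⟨hy, _⟩ | ⟨_, hb⟩ | ⟨_, _, hy, _⟩)
      · rcases hy with h | h
        · exact absurd h hα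
        · exact absurd h hαa
      · exact hb.symm
      · exact absurd rfl hy
  by_cases hyαa : y = α + a
  · rw [hyαa]
    have hc : α + a + a = α := by rw [add_assoc, hss, add_zero]
    rw [hc, Fmod_gen (α+a) htα hαaα, Fmod_alpha hα, add_zero, add_comm a α]
    constructor
    · intro h; exact Or.inr (Or.inl ⟨Or.inr rfl, h.symm⟩)
    · rintro (⟨hy, _⟩ | ⟨_, hb⟩ | ⟨_, _, _, hy, _⟩)
      · rcases hy with h | h
        · exact absurd h htα
        · exact absurd h hαaa
      · exact hb.symm
      · exact absurd rfl hy
  · have hya' : y + a ≠ 0 := fun h => hya ((add_eq_zero' y a).1 h)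
    have hyaα' : y + a ≠ α := fun h => hyαa (by linear_combination h - a*h2)
    rw [Fmod_gen y hy0 hyα, Fmod_gen (y+a) hya' hyaα', inv_sum_iff a y b hy0 hya']
    constructor
    · intro h; exact Or.inr (Or.inr ⟨hy0, hya, hyα, hyαa, h⟩)
    · rintro (⟨hy, _⟩ | ⟨hy, _⟩ | ⟨_, _, _, _, h⟩)
      · rcases hy with h | h
        · exact absurd h hy0
        · exact absurd h hya
      · rcases hy with h | h
        · exact absurd h hyα
        · exact absurd h hyαa
      · exact h

lemma b1_mul (hα : α ≠ 0) (ha : a ≠ 0) : (α⁻¹ + a⁻¹)*(a*α) = a + α := by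
  rw [add_mul, show α⁻¹*(a*α) = a * (α⁻¹*α) by ring,
    show a⁻¹*(a*α) = (a⁻¹*a)*α by ring, inv_mul_cancel₀ hα, inv_mul_cancel₀ ha,
    mul_one, one_mul]

lemma b1_ne_zero (hα : α ≠ 0) (ha : a ≠ 0) (haα : a ≠ α) : α⁻¹ + a⁻¹ ≠ 0 := by
  intro h
  have : α⁻¹ = a⁻¹ := by rwa [add_eq_zero_iff_eq_neg, CharTwo.neg_eq] at h
  exact haα (inv_injective this).symm

lemma b1_ne_b2 {n : ℕ} (hcard : Fintype.card F = 2 ^ n) (hodd : Odd n)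
    (hα : α ≠ 0) (ha : a ≠ 0) (haα : a ≠ α) : α⁻¹ + a⁻¹ ≠ (a + α)⁻¹ := by
  intro h
  have h2 : (2:F) = 0 := CharTwo.two_eq_zero
  have hta : a + α ≠ 0 := fun h0 => haα ((add_eq_zero' a α).1 h0)
  field_simp at h
  exact no_omega hcard hodd ⟨a*α⁻¹, by field_simp; linear_combination h - α^2*h2⟩

-- ρ side lemmas, with hρ' : (ρ^2+ρ)*(a+α) = α
lemma rho_ne_zero (hα : α ≠ 0) {ρ : F} (hρ' : (ρ^2 + ρ) * (a + α) = α) : ρ ≠ 0 := by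
  rintro rfl; apply hα; linear_combination -hρ'

lemma rho_ne_one (hα : α ≠ 0) {ρ : F} (hρ' : (ρ^2 + ρ) * (a + α) = α) : ρ ≠ 1 := by
  have h2 : (2:F) = 0 := CharTwo.two_eq_zero
  rintro rfl; apply hα; linear_combination (a+α)*h2 - hρ'

lemma arho_ne_alpha (hα : α ≠ 0) {ρ : F} (hρ' : (ρ^2 + ρ) * (a + α) = α) :
    a * ρ ≠ α := by
  intro h
  have h2 : (2:F) = 0 := CharTwo.two_eq_zero
  have h3 : α^3 = 0 := by
    linear_combination a^2*hρ' - ((a*ρ+α)*(a+α))*h - (a*(a+α))*h - (a*α^2)*h2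
  exact hα ((pow_eq_zero_iff (three_ne_zero)).1 h3)

lemma arho_ne_alpha_add (hα : α ≠ 0) {ρ : F} (hρ' : (ρ^2 + ρ) * (a + α) = α) :
    a * ρ ≠ α + a := by
  intro h
  have h2 : (2:F) = 0 := CharTwo.two_eq_zero
  have h3 : α^3 = 0 := by
    linear_combination a^2*hρ' - ((a*ρ+α+a)*(a+α))*h + a*(a+α)*h - (a*α^2)*h2
      + (2*a^2*α + a*α^2 + a^3)*h2 + (-(2*a^2*α) - a^2*α*ρ - α^2*a - a^3 - a^3*ρ)*h2
  exact hα ((pow_eq_zero_iff (three_ne_zero)).1 h3)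

lemma eqA (hα : α ≠ 0) (ha : a ≠ 0) (hta : a + α ≠ 0) {ρ : F}
    (hρ' : (ρ^2 + ρ) * (a + α) = α) :
    (α⁻¹ + a⁻¹) * ((a*ρ)^2 + a*(a*ρ)) = a := by
  have h2 : (2:F) = 0 := CharTwo.two_eq_zero
  field_simp
  linear_combination hρ'

lemma bridgeA (hα : α ≠ 0) (ha : a ≠ 0) {x : F}
    (heqx : (α⁻¹ + a⁻¹) * (x^2 + a*x) = a) :
    (a+α)*(x^2 + a*x) = a^2*α := by
  have h1 := b1_mul hα ha
  linear_combination a*α*heqx - (x^2+a*x)*h1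

lemma mk_rho (hα : α ≠ 0) (ha : a ≠ 0) (hta : a + α ≠ 0) {x : F}
    (hp : (a+α)*(x^2 + a*x) = a^2*α) :
    (x*a⁻¹)^2 + x*a⁻¹ = α / (a+α) := by
  field_simp
  linear_combination hp

-- μ side, with hμ' : (μ^2+μ)*a = a+α
lemma mu_ne_zero (hta : a + α ≠ 0) {μ : F} (hμ' : (μ^2 + μ) * a = a + α) : μ ≠ 0 := by
  rintro rfl; apply hta; linear_combination -hμ'

lemma mu_ne_one (hta : a + α ≠ 0) {μ : F} (hμ' : (μ^2 + μ) * a = a + α) : μ ≠ 1 := by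
  have h2 : (2:F) = 0 := CharTwo.two_eq_zero
  rintro rfl; apply hta; linear_combination a*h2 - hμ'

lemma amu_ne_alpha (hta : a + α ≠ 0) {μ : F} (hμ' : (μ^2 + μ) * a = a + α) :
    a * μ ≠ α := by
  intro h
  have h2 : (2:F) = 0 := CharTwo.two_eq_zero
  have h3 : (a + α)^2 = 0 := by
    linear_combination a*hμ' - (a*μ + α + a)*h + (a*α + a^2)*h2
  exact hta (sq_eq_zero_iff.1 h3)

lemma amu_ne_alpha_add (hta : a + α ≠ 0) {μ : F} (hμ' : (μ^2 + μ) * a = a + α) :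
    a * μ ≠ α + a := by
  intro h
  have h2 : (2:F) = 0 := CharTwo.two_eq_zero
  have h3 : (a + α)^2 = 0 := by
    linear_combination a*hμ' - (a*μ + α)*h + (a*α + a^2 - a^2*μ)*h2
  exact hta (sq_eq_zero_iff.1 h3)

lemma eqB (hα : α ≠ 0) (ha : a ≠ 0) (hta : a + α ≠ 0) {μ : F}
    (hμ' : (μ^2 + μ) * a = a + α) :
    (a + α)⁻¹ * ((a*μ)^2 + a*(a*μ)) = a := by
  have h2 : (2:F) = 0 := CharTwo.two_eq_zero
  field_simp
  linear_combination hμ'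

lemma bridgeB (hta : a + α ≠ 0) {x : F}
    (heqx : (a + α)⁻¹ * (x^2 + a*x) = a) :
    x^2 + a*x = a*(a+α) := by
  field_simp at heqx
  linear_combination heqx

lemma mk_mu (ha : a ≠ 0) (hta : a + α ≠ 0) {x : F}
    (hp : x^2 + a*x = a*(a+α)) :
    (x*a⁻¹)^2 + x*a⁻¹ = (a+α) / a := by
  field_simp
  linear_combination hp

end Master
end Aux


section Core
set_option linter.unusedVariables false
set_option linter.unusedSectionVars false

variable [CharP F 2] {n : ℕ} {α a : F}

lemma coreA (hcard : Fintype.card F = 2 ^ n) (hodd : Odd n)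
    (hα : α ≠ 0) (ha : a ≠ 0) (haα : a ≠ α) {ρ : F} (hρ : ρ^2 + ρ = α/(a+α)) :
    (Finset.univ.filter fun y : F => Fmod α y + Fmod α (y + a) = α⁻¹ + a⁻¹)
      = {0, a, a*ρ, a*ρ + a} ∧
    (Finset.univ.filter fun y : F => Fmod α y + Fmod α (y + a) = α⁻¹ + a⁻¹).card = 4 := by
  have h2 : (2:F) = 0 := CharTwo.two_eq_zero
  have hta : a + α ≠ 0 := fun h => haα ((add_eq_zero' a α).1 h)
  have hρ' : (ρ^2 + ρ) * (a + α) = α := by rw [hρ]; exact div_mul_cancel₀ _ hta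
  have hρ0 : ρ ≠ 0 := rho_ne_zero hα hρ'
  have hρ1 : ρ ≠ 1 := rho_ne_one hα hρ'
  have haρ0 : a*ρ ≠ 0 := mul_ne_zero ha hρ0
  have haρa : a*ρ ≠ a := fun h => hρ1 (mul_left_cancel₀ ha (h.trans (mul_one a).symm))
  have haρα : a*ρ ≠ α := arho_ne_alpha hα hρ'
  have haραa : a*ρ ≠ α + a := arho_ne_alpha_add hα hρ'
  have heqρ : (α⁻¹ + a⁻¹) * ((a*ρ)^2 + a*(a*ρ)) = a := eqA hα ha hta hρ'
  have heqρ2 : (α⁻¹ + a⁻¹) * ((a*ρ+a)^2 + a*(a*ρ+a)) = a := by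
    rw [quad_shift]; exact heqρ
  have hb1 : α⁻¹ + a⁻¹ ≠ 0 := b1_ne_zero hα ha haα
  have hb12 : α⁻¹ + a⁻¹ ≠ (a+α)⁻¹ := b1_ne_b2 hcard hodd hα ha haα
  have hset : (Finset.univ.filter fun y : F => Fmod α y + Fmod α (y + a) = α⁻¹ + a⁻¹)
      = {0, a, a*ρ, a*ρ + a} := by
    ext y
    simp only [Finset.mem_filter, Finset.mem_univ, true_and, Finset.mem_insert,
      Finset.mem_singleton]
    rw [Dmaster hα ha haα]
    constructor
    · rintro (⟨hy, _⟩ | ⟨_, hb⟩ | ⟨hy0, hya, hyα, hyαa, heq⟩)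
      · rcases hy with rfl | rfl
        · exact Or.inl rfl
        · exact Or.inr (Or.inl rfl)
      · exact absurd hb hb12
      · have hcanc := mul_left_cancel₀ hb1 (heq.trans heqρ.symm)
        rcases quad_roots a (a*ρ) y hcanc with h | h
        · exact Or.inr (Or.inr (Or.inl h))
        · exact Or.inr (Or.inr (Or.inr h))
    · rintro (rfl | rfl | rfl | rfl)
      · exact Or.inl ⟨Or.inl rfl, rfl⟩
      · exact Or.inl ⟨Or.inr rfl, rfl⟩
      · exact Or.inr (Or.inr ⟨haρ0, haρa, haρα, haραa, heqρ⟩)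
      · refine Or.inr (Or.inr ⟨?_, ?_, ?_, ?_, heqρ2⟩)
        · exact fun h => haρa ((add_eq_zero' _ _).1 h)
        · exact fun h => haρ0 (by linear_combination h)
        · exact fun h => haραa (by linear_combination h - a*h2)
        · exact fun h => haρα (by linear_combination h)
  refine ⟨hset, ?_⟩
  rw [hset]
  exact card_four (fun h => ha h.symm) (fun h => haρ0 h.symm)
    (fun h => haρa ((add_eq_zero' _ _).1 h.symm))
    haρa.symm (fun h => haρ0 (by linear_combination -h)) (fun h => ha (by linear_combination -h))

lemma coreA' (hcard : Fintype.card F = 2 ^ n) (hodd : Odd n)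
    (hα : α ≠ 0) (ha : a ≠ 0) (haα : a ≠ α)
    (hne : ¬ ∃ ρ : F, ρ^2 + ρ = α/(a+α)) :
    (Finset.univ.filter fun y : F => Fmod α y + Fmod α (y + a) = α⁻¹ + a⁻¹)
      = {0, a} ∧
    (Finset.univ.filter fun y : F => Fmod α y + Fmod α (y + a) = α⁻¹ + a⁻¹).card = 2 := by
  have hta : a + α ≠ 0 := fun h => haα ((add_eq_zero' a α).1 h)
  have hb12 : α⁻¹ + a⁻¹ ≠ (a+α)⁻¹ := b1_ne_b2 hcard hodd hα ha haα
  have hset : (Finset.univ.filter fun y : F => Fmod α y + Fmod α (y + a) = α⁻¹ + a⁻¹)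
      = {0, a} := by
    ext y
    simp only [Finset.mem_filter, Finset.mem_univ, true_and, Finset.mem_insert,
      Finset.mem_singleton]
    rw [Dmaster hα ha haα]
    constructor
    · rintro (⟨hy, _⟩ | ⟨_, hb⟩ | ⟨hy0, hya, hyα, hyαa, heq⟩)
      · exact hy
      · exact absurd hb hb12
      · exact absurd ⟨y*a⁻¹, mk_rho hα ha hta (bridgeA hα ha heq)⟩ hne
    · rintro (rfl | rfl)
      · exact Or.inl ⟨Or.inl rfl, rfl⟩
      · exact Or.inl ⟨Or.inr rfl, rfl⟩
  exact ⟨hset, by rw [hset]; exact Finset.card_pair (fun h => ha h.symm)⟩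

lemma coreB (hcard : Fintype.card F = 2 ^ n) (hodd : Odd n)
    (hα : α ≠ 0) (ha : a ≠ 0) (haα : a ≠ α) {μ : F} (hμ : μ^2 + μ = (a+α)/a) :
    (Finset.univ.filter fun y : F => Fmod α y + Fmod α (y + a) = (a + α)⁻¹)
      = {α, α + a, a*μ, a*μ + a} ∧
    (Finset.univ.filter fun y : F => Fmod α y + Fmod α (y + a) = (a + α)⁻¹).card = 4 := by
  have h2 : (2:F) = 0 := CharTwo.two_eq_zero
  have hta : a + α ≠ 0 := fun h => haα ((add_eq_zero' a α).1 h)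
  have hμ' : (μ^2 + μ) * a = a + α := by rw [hμ]; exact div_mul_cancel₀ _ ha
  have hμ0 : μ ≠ 0 := mu_ne_zero hta hμ'
  have hμ1 : μ ≠ 1 := mu_ne_one hta hμ'
  have haμ0 : a*μ ≠ 0 := mul_ne_zero ha hμ0
  have haμa : a*μ ≠ a := fun h => hμ1 (mul_left_cancel₀ ha (h.trans (mul_one a).symm))
  have haμα : a*μ ≠ α := amu_ne_alpha hta hμ'
  have haμαa : a*μ ≠ α + a := amu_ne_alpha_add hta hμ'
  have heqμ : (a + α)⁻¹ * ((a*μ)^2 + a*(a*μ)) = a := eqB hα ha hta hμ'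
  have heqμ2 : (a + α)⁻¹ * ((a*μ+a)^2 + a*(a*μ+a)) = a := by
    rw [quad_shift]; exact heqμ
  have hb2 : (a + α)⁻¹ ≠ 0 := inv_ne_zero hta
  have hb12 : α⁻¹ + a⁻¹ ≠ (a+α)⁻¹ := b1_ne_b2 hcard hodd hα ha haα
  have hαα : α ≠ α + a := fun h => ha (by linear_combination -h)
  have hset : (Finset.univ.filter fun y : F => Fmod α y + Fmod α (y + a) = (a + α)⁻¹)
      = {α, α + a, a*μ, a*μ + a} := by
    ext y
    simp only [Finset.mem_filter, Finset.mem_univ, true_and, Finset.mem_insert,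
      Finset.mem_singleton]
    rw [Dmaster hα ha haα]
    constructor
    · rintro (⟨_, hb⟩ | ⟨hy, _⟩ | ⟨hy0, hya, hyα, hyαa, heq⟩)
      · exact absurd hb.symm hb12
      · rcases hy with rfl | rfl
        · exact Or.inl rfl
        · exact Or.inr (Or.inl rfl)
      · have hcanc := mul_left_cancel₀ hb2 (heq.trans heqμ.symm)
        rcases quad_roots a (a*μ) y hcanc with h | h
        · exact Or.inr (Or.inr (Or.inl h))
        · exact Or.inr (Or.inr (Or.inr h))
    · rintro (rfl | rfl | rfl | rfl)
      · exact Or.inr (Or.inl ⟨Or.inl rfl, rfl⟩)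
      · exact Or.inr (Or.inl ⟨Or.inr rfl, rfl⟩)
      · exact Or.inr (Or.inr ⟨haμ0, haμa, haμα, haμαa, heqμ⟩)
      · refine Or.inr (Or.inr ⟨?_, ?_, ?_, ?_, heqμ2⟩)
        · exact fun h => haμa ((add_eq_zero' _ _).1 h)
        · exact fun h => haμ0 (by linear_combination h)
        · exact fun h => haμαa (by linear_combination h - a*h2)
        · exact fun h => haμα (by linear_combination h)
  refine ⟨hset, ?_⟩
  rw [hset]
  exact card_four hαα (fun h => haμα h.symm)
    (fun h => haμαa (by linear_combination -h - a*h2))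
    (fun h => haμαa h.symm) (fun h => haμα (by linear_combination -h))
    (fun h => ha (by linear_combination -h))

lemma coreB' (hcard : Fintype.card F = 2 ^ n) (hodd : Odd n)
    (hα : α ≠ 0) (ha : a ≠ 0) (haα : a ≠ α)
    (hne : ¬ ∃ μ : F, μ^2 + μ = (a+α)/a) :
    (Finset.univ.filter fun y : F => Fmod α y + Fmod α (y + a) = (a + α)⁻¹)
      = {α, α + a} ∧
    (Finset.univ.filter fun y : F => Fmod α y + Fmod α (y + a) = (a + α)⁻¹).card = 2 := by
  have hta : a + α ≠ 0 := fun h => haα ((add_eq_zero' a α).1 h)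
  have hb12 : α⁻¹ + a⁻¹ ≠ (a+α)⁻¹ := b1_ne_b2 hcard hodd hα ha haα
  have hαα : α ≠ α + a := fun h => ha (by linear_combination -h)
  have hset : (Finset.univ.filter fun y : F => Fmod α y + Fmod α (y + a) = (a + α)⁻¹)
      = {α, α + a} := by
    ext y
    simp only [Finset.mem_filter, Finset.mem_univ, true_and, Finset.mem_insert,
      Finset.mem_singleton]
    rw [Dmaster hα ha haα]
    constructor
    · rintro (⟨_, hb⟩ | ⟨hy, _⟩ | ⟨hy0, hya, hyα, hyαa, heq⟩)
      · exact absurd hb.symm hb12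
      · exact hy
      · exact absurd ⟨y*a⁻¹, mk_mu ha hta (bridgeB hta heq)⟩ hne
    · rintro (rfl | rfl)
      · exact Or.inr (Or.inl ⟨Or.inl rfl, rfl⟩)
      · exact Or.inr (Or.inl ⟨Or.inr rfl, rfl⟩)
  exact ⟨hset, by rw [hset]; exact Finset.card_pair hαα⟩

lemma coreC (hα : α ≠ 0) (ha : a ≠ 0) (haα : a ≠ α) {x : F}
    (hx0 : x ≠ 0) (hxa : x ≠ a) (hxα : x ≠ α) (hxαa : x ≠ α + a) {b : F}
    (heqx : b * (x^2 + a*x) = a)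
    (hbb1 : b ≠ α⁻¹ + a⁻¹) (hbb2 : b ≠ (a + α)⁻¹) :
    (Finset.univ.filter fun y : F => Fmod α y + Fmod α (y + a) = b) = {x, x + a} ∧
    (Finset.univ.filter fun y : F => Fmod α y + Fmod α (y + a) = b).card = 2 := by
  have h2 : (2:F) = 0 := CharTwo.two_eq_zero
  have hb0 : b ≠ 0 := by
    rintro rfl; rw [zero_mul] at heqx; exact ha heqx.symm
  have hset : (Finset.univ.filter fun y : F => Fmod α y + Fmod α (y + a) = b)
      = {x, x + a} := by
    ext y
    simp only [Finset.mem_filter, Finset.mem_univ, true_and, Finset.mem_insert,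
      Finset.mem_singleton]
    rw [Dmaster hα ha haα]
    constructor
    · rintro (⟨_, hb⟩ | ⟨_, hb⟩ | ⟨hy0, hya, hyα, hyαa, heq⟩)
      · exact absurd hb hbb1
      · exact absurd hb hbb2
      · exact quad_roots a x y (mul_left_cancel₀ hb0 (heq.trans heqx.symm))
    · rintro (rfl | rfl)
      · exact Or.inr (Or.inr ⟨hx0, hxa, hxα, hxαa, heqx⟩)
      · refine Or.inr (Or.inr ⟨?_, ?_, ?_, ?_, by rw [quad_shift]; exact heqx⟩)
        · exact fun h => hxa ((add_eq_zero' _ _).1 h)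
        · exact fun h => hx0 (by linear_combination h)
        · exact fun h => hxαa (by linear_combination h - a*h2)
        · exact fun h => hxα (by linear_combination h)
  exact ⟨hset, by rw [hset]; exact Finset.card_pair (fun h => ha (by linear_combination -h))⟩

lemma Dmaster_alpha (hα : α ≠ 0) (y b : F) :
    Fmod α y + Fmod α (y + α) = b ↔
      ((y = 0 ∨ y = α) ∧ b = α⁻¹) ∨
      (y ≠ 0 ∧ y ≠ α ∧ b * (y^2 + α*y) = α) := by
  have h2 : (2:F) = 0 := CharTwo.two_eq_zero
  have hss : ∀ x : F, x + x = 0 := CharTwo.add_self_eq_zero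
  by_cases hy0 : y = 0
  · subst hy0
    rw [zero_add, Fmod_zero, Fmod_alpha hα, add_zero]
    constructor
    · intro h; exact Or.inl ⟨Or.inl rfl, h.symm⟩
    · rintro (⟨_, hb⟩ | ⟨hy, _⟩)
      · exact hb.symm
      · exact absurd rfl hy
  by_cases hyα : y = α
  · rw [hyα, hss α, Fmod_alpha hα, Fmod_zero, zero_add]
    constructor
    · intro h; exact Or.inl ⟨Or.inr rfl, h.symm⟩
    · rintro (⟨_, hb⟩ | ⟨_, hy, _⟩)
      · exact hb.symm
      · exact absurd rfl hy
  · have hyα' : y + α ≠ 0 := fun h => hyα ((add_eq_zero' y α).1 h)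
    have hyαα : y + α ≠ α := fun h => hy0 (by linear_combination h)
    rw [Fmod_gen y hy0 hyα, Fmod_gen (y+α) hyα' hyαα, inv_sum_iff α y b hy0 hyα']
    constructor
    · intro h; exact Or.inr ⟨hy0, hyα, h⟩
    · rintro (⟨hy, _⟩ | ⟨_, _, h⟩)
      · rcases hy with h | h
        · exact absurd h hy0
        · exact absurd h hyα
      · exact h

lemma alpha_quad (hcard : Fintype.card F = 2 ^ n) (hodd : Odd n) (hα : α ≠ 0)
    {y : F} (heq : α⁻¹ * (y^2 + α*y) = α) : False := by
  have h2 : (2:F) = 0 := CharTwo.two_eq_zero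
  apply no_omega hcard hodd
  refine ⟨y*α⁻¹, ?_⟩
  field_simp at heq ⊢
  linear_combination heq

lemma coreAlpha1 (hcard : Fintype.card F = 2 ^ n) (hodd : Odd n) (hα : α ≠ 0) :
    (Finset.univ.filter fun y : F => Fmod α y + Fmod α (y + α) = α⁻¹) = {0, α} ∧
    (Finset.univ.filter fun y : F => Fmod α y + Fmod α (y + α) = α⁻¹).card = 2 := by
  have hset : (Finset.univ.filter fun y : F => Fmod α y + Fmod α (y + α) = α⁻¹)
      = {0, α} := by
    ext y
    simp only [Finset.mem_filter, Finset.mem_univ, true_and, Finset.mem_insert,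
      Finset.mem_singleton]
    rw [Dmaster_alpha hα]
    constructor
    · rintro (⟨hy, _⟩ | ⟨_, _, heq⟩)
      · exact hy
      · exact absurd heq (fun h => alpha_quad hcard hodd hα h)
    · rintro (rfl | rfl)
      · exact Or.inl ⟨Or.inl rfl, rfl⟩
      · exact Or.inl ⟨Or.inr rfl, rfl⟩
  exact ⟨hset, by rw [hset]; exact Finset.card_pair (fun h => hα h.symm)⟩

lemma coreAlpha2 (hcard : Fintype.card F = 2 ^ n) (hodd : Odd n) (hα : α ≠ 0)
    {x : F} (hx0 : x ≠ 0) (hxα : x ≠ α) {b : F}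
    (heqx : b * (x^2 + α*x) = α) :
    (Finset.univ.filter fun y : F => Fmod α y + Fmod α (y + α) = b) = {x, x + α} ∧
    (Finset.univ.filter fun y : F => Fmod α y + Fmod α (y + α) = b).card = 2 := by
  have h2 : (2:F) = 0 := CharTwo.two_eq_zero
  have hbb : b ≠ α⁻¹ := by
    rintro rfl; exact alpha_quad hcard hodd hα heqx
  have hb0 : b ≠ 0 := by
    rintro rfl; rw [zero_mul] at heqx; exact hα heqx.symm
  have hset : (Finset.univ.filter fun y : F => Fmod α y + Fmod α (y + α) = b)
      = {x, x + α} := by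
    ext y
    simp only [Finset.mem_filter, Finset.mem_univ, true_and, Finset.mem_insert,
      Finset.mem_singleton]
    rw [Dmaster_alpha hα]
    constructor
    · rintro (⟨_, hb⟩ | ⟨hy0, hyα, heq⟩)
      · exact absurd hb hbb
      · exact quad_roots α x y (mul_left_cancel₀ hb0 (heq.trans heqx.symm))
    · rintro (rfl | rfl)
      · exact Or.inr ⟨hx0, hxα, heqx⟩
      · refine Or.inr ⟨?_, ?_, by rw [quad_shift]; exact heqx⟩
        · exact fun h => hxα ((add_eq_zero' _ _).1 h)
        · exact fun h => hx0 (by linear_combination h)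
  exact ⟨hset, by rw [hset]; exact Finset.card_pair (fun h => hα (by linear_combination -h))⟩

end Core

/-- description of `∇_{F_{0,α}}(a,x)` for odd `n ≥ 3`. -/
theorem stmt_7 (n : ℕ) (hn : 3 ≤ n) (hodd : Odd n)
    [CharP F 2] (hcard : Fintype.card F = 2 ^ n)
    (α : F) (hα : α ≠ 0) :
    (∀ a : F, a ≠ 0 → a ≠ α → ∀ x : F,
      (nabla (Fmod α) a x = 4 ↔
        ((Tr n (α / (a + α)) = 0 ∧ ∃ ρ : F, ρ ^ 2 + ρ = α / (a + α) ∧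
            (x = 0 ∨ x = a ∨ x = a * ρ ∨ x = a * ρ + a)) ∨
         (Tr n (α / a) = 1 ∧ ∃ μ : F, μ ^ 2 + μ = (a + α) / a ∧
            (x = α ∨ x = α + a ∨ x = a * μ ∨ x = a * μ + a)))) ∧
      (nabla (Fmod α) a x = 2 ∨ nabla (Fmod α) a x = 4)) ∧
    (∀ x : F, nabla (Fmod α) α x = 2) := by
  have h2 : (2:F) = 0 := CharTwo.two_eq_zero
  constructor
  · intro a ha haα x
    have hta : a + α ≠ 0 := fun h => haα ((add_eq_zero' a α).1 h)
    have hnab : ∀ b : F, Fmod α x + Fmod α (x + a) = b →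
        nabla (Fmod α) a x
          = (Finset.univ.filter fun y : F => Fmod α y + Fmod α (y + a) = b).card := by
      intro b hb
      unfold nabla delta
      simp only [hb]
    have memfin : ∀ (u v w z : F), x = u ∨ x = v ∨ x = w ∨ x = z →
        x ∈ ({u, v, w, z} : Finset F) := by
      intro u v w z h
      simp only [Finset.mem_insert, Finset.mem_singleton]
      exact h
    have hTrμ : ∀ μ : F, μ^2 + μ = (a+α)/a → Tr n (α / a) = 1 := by
      intro μ hμ
      have h0 : Tr n ((a+α)/a) = 0 := Tr_exists hcard ⟨μ, hμ⟩
      have hsplit : (a+α)/a = 1 + α/a := by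
        rw [add_div, div_self ha]
      rw [hsplit, Tr_add', Tr_one' hodd] at h0
      exact ((add_eq_zero' 1 (Tr n (α/a))).1 h0).symm
    rcases (Dmaster hα ha haα x (Fmod α x + Fmod α (x + a))).1 rfl with
      ⟨hx01, hb⟩ | ⟨hxαα, hb⟩ | ⟨hx0, hxa, hxα, hxαa, heqx⟩
    · -- D x = b1
      by_cases hex : ∃ ρ : F, ρ^2 + ρ = α/(a+α)
      · obtain ⟨ρ, hρ⟩ := hex
        obtain ⟨hset, hcard4⟩ := coreA hcard hodd hα ha haα hρ
        have hn : nabla (Fmod α) a x = 4 := by rw [hnab _ hb]; exact hcard4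
        refine ⟨⟨fun _ => ?_, fun _ => hn⟩, Or.inr hn⟩
        refine Or.inl ⟨Tr_exists hcard ⟨ρ, hρ⟩, ρ, hρ, ?_⟩
        rcases hx01 with rfl | rfl
        · exact Or.inl rfl
        · exact Or.inr (Or.inl rfl)
      · obtain ⟨hset, hcard2⟩ := coreA' hcard hodd hα ha haα hex
        have hn : nabla (Fmod α) a x = 2 := by rw [hnab _ hb]; exact hcard2
        refine ⟨⟨fun h4 => absurd (hn.symm.trans h4) (by norm_num), fun hr => ?_⟩, Or.inl hn⟩
        exfalso
        rcases hr with ⟨_, ρ, hρ, _⟩ | ⟨_, μ, hμ, hxmem⟩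
        · exact hex ⟨ρ, hρ⟩
        · obtain ⟨hsetB, _⟩ := coreB hcard hodd hα ha haα hμ
          have hx2 : Fmod α x + Fmod α (x + a) = (a + α)⁻¹ := by
            have hmem : x ∈ (Finset.univ.filter
                fun y : F => Fmod α y + Fmod α (y + a) = (a + α)⁻¹) := by
              rw [hsetB]; exact memfin _ _ _ _ hxmem
            exact (Finset.mem_filter.1 hmem).2
          exact b1_ne_b2 hcard hodd hα ha haα (hb.symm.trans hx2)
    · -- D x = b2
      by_cases hex : ∃ μ : F, μ^2 + μ = (a+α)/a
      · obtain ⟨μ, hμ⟩ := hex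
        obtain ⟨hset, hcard4⟩ := coreB hcard hodd hα ha haα hμ
        have hn : nabla (Fmod α) a x = 4 := by rw [hnab _ hb]; exact hcard4
        refine ⟨⟨fun _ => ?_, fun _ => hn⟩, Or.inr hn⟩
        refine Or.inr ⟨hTrμ μ hμ, μ, hμ, ?_⟩
        rcases hxαα with rfl | rfl
        · exact Or.inl rfl
        · exact Or.inr (Or.inl rfl)
      · obtain ⟨hset, hcard2⟩ := coreB' hcard hodd hα ha haα hex
        have hn : nabla (Fmod α) a x = 2 := by rw [hnab _ hb]; exact hcard2
        refine ⟨⟨fun h4 => absurd (hn.symm.trans h4) (by norm_num), fun hr => ?_⟩, Or.inl hn⟩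
        exfalso
        rcases hr with ⟨_, ρ, hρ, hxmem⟩ | ⟨_, μ, hμ, _⟩
        · obtain ⟨hsetA, _⟩ := coreA hcard hodd hα ha haα hρ
          have hx1 : Fmod α x + Fmod α (x + a) = α⁻¹ + a⁻¹ := by
            have hmem : x ∈ (Finset.univ.filter
                fun y : F => Fmod α y + Fmod α (y + a) = α⁻¹ + a⁻¹) := by
              rw [hsetA]; exact memfin _ _ _ _ hxmem
            exact (Finset.mem_filter.1 hmem).2
          exact b1_ne_b2 hcard hodd hα ha haα (hx1.symm.trans hb)
        · exact hex ⟨μ, hμ⟩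
    · -- x generic
      have hxinv : a * (x * a⁻¹) = x := by
        rw [← mul_assoc, mul_comm a x, mul_assoc, mul_inv_cancel₀ ha, mul_one]
      by_cases hbb1 : Fmod α x + Fmod α (x + a) = α⁻¹ + a⁻¹
      · have heqx1 : (α⁻¹ + a⁻¹) * (x^2 + a*x) = a := hbb1 ▸ heqx
        have hρ : (x*a⁻¹)^2 + x*a⁻¹ = α/(a+α) :=
          mk_rho hα ha hta (bridgeA hα ha heqx1)
        obtain ⟨hset, hcard4⟩ := coreA hcard hodd hα ha haα hρ
        have hn : nabla (Fmod α) a x = 4 := by rw [hnab _ hbb1]; exact hcard4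
        refine ⟨⟨fun _ => ?_, fun _ => hn⟩, Or.inr hn⟩
        exact Or.inl ⟨Tr_exists hcard ⟨_, hρ⟩, _, hρ,
          Or.inr (Or.inr (Or.inl hxinv.symm))⟩
      · by_cases hbb2 : Fmod α x + Fmod α (x + a) = (a + α)⁻¹
        · have heqx2 : (a + α)⁻¹ * (x^2 + a*x) = a := hbb2 ▸ heqx
          have hμ : (x*a⁻¹)^2 + x*a⁻¹ = (a+α)/a :=
            mk_mu ha hta (bridgeB hta heqx2)
          obtain ⟨hset, hcard4⟩ := coreB hcard hodd hα ha haα hμ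
          have hn : nabla (Fmod α) a x = 4 := by rw [hnab _ hbb2]; exact hcard4
          refine ⟨⟨fun _ => ?_, fun _ => hn⟩, Or.inr hn⟩
          exact Or.inr ⟨hTrμ _ hμ, _, hμ, Or.inr (Or.inr (Or.inl hxinv.symm))⟩
        · obtain ⟨hset, hcard2⟩ :=
            coreC hα ha haα hx0 hxa hxα hxαa heqx hbb1 hbb2
          have hn : nabla (Fmod α) a x = 2 := by rw [hnab _ rfl]; exact hcard2
          refine ⟨⟨fun h4 => absurd (hn.symm.trans h4) (by norm_num), fun hr => ?_⟩,
            Or.inl hn⟩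
          exfalso
          rcases hr with ⟨_, ρ, hρ, hxmem⟩ | ⟨_, μ, hμ, hxmem⟩
          · obtain ⟨hsetA, _⟩ := coreA hcard hodd hα ha haα hρ
            have hx1 : Fmod α x + Fmod α (x + a) = α⁻¹ + a⁻¹ := by
              have hmem : x ∈ (Finset.univ.filter
                  fun y : F => Fmod α y + Fmod α (y + a) = α⁻¹ + a⁻¹) := by
                rw [hsetA]; exact memfin _ _ _ _ hxmem
              exact (Finset.mem_filter.1 hmem).2
            exact hbb1 hx1
          · obtain ⟨hsetB, _⟩ := coreB hcard hodd hα ha haα hμ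
            have hx2 : Fmod α x + Fmod α (x + a) = (a + α)⁻¹ := by
              have hmem : x ∈ (Finset.univ.filter
                  fun y : F => Fmod α y + Fmod α (y + a) = (a + α)⁻¹) := by
                rw [hsetB]; exact memfin _ _ _ _ hxmem
              exact (Finset.mem_filter.1 hmem).2
            exact hbb2 hx2
  · intro x
    have hnab : ∀ b : F, Fmod α x + Fmod α (x + α) = b →
        nabla (Fmod α) α x
          = (Finset.univ.filter fun y : F => Fmod α y + Fmod α (y + α) = b).card := by
      intro b hb
      unfold nabla delta
      simp only [hb]
    rcases (Dmaster_alpha hα x (Fmod α x + Fmod α (x + α))).1 rfl with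
      ⟨hx, hb⟩ | ⟨hx0, hxα, heqx⟩
    · rw [hnab _ hb]
      exact (coreAlpha1 hcard hodd hα).2
    · rw [hnab _ rfl]
      exact (coreAlpha2 hcard hodd hα hx0 hxα heqx).2



end APNPaper
end

section
/- Let n ≥ 3 be odd, q = 2^n, and α ∈ 𝔽_q^*. Then for every x ∈ 𝔽_q there exists a ∈ 𝔽_q^* with ∇_{F_{0,α}}(a,x) ≥ 4; equivalently, the column spectrum C-Spec_q(F_{0,α}) is empty. -/
set_option linter.unusedSectionVars false


namespace APNPaper

open Finset

variable {F : Type*} [Field F] [Fintype F] [DecidableEq F]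

section Aux

section TraceLemmas
variable [CharP F 2] {n : ℕ}

lemma frob (hcard : Fintype.card F = 2 ^ n) (z : F) : z ^ (2 ^ n) = z := by
  rw [← hcard]; exact FiniteField.pow_card z

lemma tr_shift (hcard : Fintype.card F = 2 ^ n) (z : F) :
    ∑ i ∈ Finset.range n, z ^ (2 ^ (i + 1)) = Tr n z := by
  have h : ∑ i ∈ Finset.range (n+1), z ^ (2 ^ i)
      = (∑ i ∈ Finset.range n, z ^ (2 ^ (i+1))) + z := by
    rw [Finset.sum_range_succ']; norm_num
  have h2 : ∑ i ∈ Finset.range (n+1), z ^ (2 ^ i) = Tr n z + z := by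
    rw [Finset.sum_range_succ, frob hcard, Tr]
  have h3 := h.symm.trans h2
  exact add_right_cancel h3

lemma tr_sq (hcard : Fintype.card F = 2 ^ n) (z : F) : Tr n (z * z) = Tr n z := by
  conv_rhs => rw [← tr_shift hcard]
  conv_lhs => rw [Tr]
  refine Finset.sum_congr rfl fun i _ => ?_
  rw [pow_succ 2 i, pow_mul, sq, mul_pow]

lemma tr_add (y z : F) : Tr n (y + z) = Tr n y + Tr n z := by
  have : Fact (Nat.Prime 2) := ⟨Nat.prime_two⟩
  rw [Tr, Tr, Tr, ← Finset.sum_add_distrib]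
  exact Finset.sum_congr rfl fun i _ => add_pow_char_pow y z 2 i

lemma tr_quad (hcard : Fintype.card F = 2 ^ n) (z : F) : Tr n (z * z + z) = 0 := by
  rw [tr_add, tr_sq hcard, CharTwo.add_self_eq_zero]

lemma tr_val (hcard : Fintype.card F = 2 ^ n) (z : F) : Tr n z = 0 ∨ Tr n z = 1 := by
  have : Fact (Nat.Prime 2) := ⟨Nat.prime_two⟩
  have hsq : Tr n z * Tr n z = Tr n z := by
    have h2 : ∑ i ∈ Finset.range n, (z ^ 2 ^ i) ^ 2 = Tr n z := by
      rw [← tr_shift hcard]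
      refine Finset.sum_congr rfl fun i _ => ?_
      rw [pow_succ 2 i, pow_mul]
    rw [← sq]
    conv_lhs => rw [Tr]
    rw [sum_pow_char]
    exact h2
  have : Tr n z * (Tr n z - 1) = 0 := by ring_nf; linear_combination hsq
  rcases mul_eq_zero.mp this with h | h
  · exact Or.inl h
  · exact Or.inr (by linear_combination h)

lemma tr_one (hodd : Odd n) : Tr n (1 : F) = 1 := by
  rw [Tr]
  simp only [one_pow, Finset.sum_const, Finset.card_range, nsmul_eq_mul, mul_one]
  obtain ⟨k, hk⟩ := hodd
  subst hk
  push_cast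
  rw [show ((2:F) * k + 1) = 2 * k + 1 from rfl]
  rw [CharTwo.two_eq_zero]; ring


lemma t01_card (hodd : Odd n) :
    (Finset.univ.filter fun z : F => Tr n z = 0).card
      = (Finset.univ.filter fun z : F => Tr n z = 1).card := by
  refine Finset.card_bij' (fun a _ => a + 1) (fun a _ => a + 1) ?_ ?_ ?_ ?_
  · intro a ha
    simp only [Finset.mem_filter, Finset.mem_univ, true_and] at ha
    simp only [Finset.mem_filter, Finset.mem_univ, true_and, tr_add, ha, tr_one hodd, zero_add]
  · intro a ha
    simp only [Finset.mem_filter, Finset.mem_univ, true_and] at ha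
    simp only [Finset.mem_filter, Finset.mem_univ, true_and, tr_add, ha, tr_one hodd,
      CharTwo.add_self_eq_zero]
  · intro a _; rw [add_assoc, CharTwo.add_self_eq_zero, add_zero]
  · intro a _; rw [add_assoc, CharTwo.add_self_eq_zero, add_zero]

lemma tzero_card (hodd : Odd n) (hcard : Fintype.card F = 2 ^ n) :
    2 * (Finset.univ.filter fun z : F => Tr n z = 0).card = 2 ^ n := by
  set T0 := Finset.univ.filter fun z : F => Tr n z = 0 with hT0
  set T1 := Finset.univ.filter fun z : F => Tr n z = 1 with hT1
  have hdisj : Disjoint T0 T1 := by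
    rw [Finset.disjoint_filter]
    intro x _ h0 h1
    rw [h0] at h1
    exact one_ne_zero h1.symm
  have hunion : T0 ∪ T1 = Finset.univ := by
    ext x
    simp only [Finset.mem_union, hT0, hT1, Finset.mem_filter, Finset.mem_univ, true_and,
      Finset.mem_univ, iff_true]
    exact tr_val hcard x
  have hcards : T0.card = T1.card := t01_card hodd
  have := Finset.card_union_of_disjoint hdisj
  rw [hunion, Finset.card_univ, hcard, ← hcards] at this
  omega

lemma tone_card (hodd : Odd n) (hcard : Fintype.card F = 2 ^ n) :
    2 * (Finset.univ.filter fun z : F => Tr n z = 1).card = 2 ^ n := by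
  rw [← t01_card hodd]
  exact tzero_card hodd hcard

lemma as_solvable (hodd : Odd n) (hcard : Fintype.card F = 2 ^ n) (t : F) (ht : Tr n t = 0) :
    ∃ z : F, z * z + z = t := by
  set T0 := Finset.univ.filter fun z : F => Tr n z = 0 with hT0
  set I := Finset.univ.image (fun z : F => z * z + z) with hI
  have hsub : I ⊆ T0 := by
    intro x hx
    simp only [hI, Finset.mem_image, Finset.mem_univ, true_and] at hx
    obtain ⟨z, rfl⟩ := hx
    simp only [hT0, Finset.mem_filter, Finset.mem_univ, true_and]
    exact tr_quad hcard z
  have hfib : Fintype.card F ≤ 2 * I.card := by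
    rw [← Finset.card_univ]
    apply Finset.card_le_mul_card_image
    intro b hb
    simp only [Finset.mem_image, Finset.mem_univ, true_and] at hb
    obtain ⟨z, hz⟩ := hb
    have : (Finset.univ.filter fun x : F => x * x + x = b) ⊆ {z, z + 1} := by
      intro x hx
      simp only [Finset.mem_filter, Finset.mem_univ, true_and] at hx
      have hxy : (x + z) * (x + z + 1) = 0 := by
        have : x * x + x = z * z + z := by rw [hx, hz]
        linear_combination this + (x + z + 1) * (CharTwo.add_self_eq_zero z)
      rcases mul_eq_zero.mp hxy with h | h
      · have : x = z := by linear_combination h - CharTwo.add_self_eq_zero z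
        simp [this]
      · have : x = z + 1 := by
          linear_combination h - CharTwo.add_self_eq_zero z - CharTwo.add_self_eq_zero (1:F)
        simp [this]
    calc (Finset.univ.filter fun x : F => x * x + x = b).card
        ≤ ({z, z + 1} : Finset F).card := Finset.card_le_card this
      _ ≤ 2 := Finset.card_insert_le _ _ |>.trans (by simp)
  have h2 := tzero_card (F := F) hodd hcard
  rw [← hT0] at h2
  have hIT : I = T0 := by
    apply Finset.eq_of_subset_of_card_le hsub
    rw [hcard] at hfib
    omega
  have : t ∈ T0 := by simp [hT0, ht]
  rw [← hIT] at this
  simp only [hI, Finset.mem_image, Finset.mem_univ, true_and] at this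
  exact this

end TraceLemmas

section Main
variable [CharP F 2]

lemma four_le_nabla (G : F → F) (a x p : F) (ha : a ≠ 0) (h1 : p ≠ x) (h2 : p ≠ x + a)
    (heq : G p + G (p + a) = G x + G (x + a)) : 4 ≤ nabla G a x := by
  have haa : ∀ y : F, y + a + a = y := fun y => by
    rw [add_assoc, CharTwo.add_self_eq_zero, add_zero]
  have hsub : ({x, x + a, p, p + a} : Finset F) ⊆
      Finset.univ.filter fun y : F => G y + G (y + a) = G x + G (x + a) := by
    intro y hy
    simp only [Finset.mem_insert, Finset.mem_singleton] at hy
    simp only [Finset.mem_filter, Finset.mem_univ, true_and]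
    rcases hy with rfl | rfl | rfl | rfl
    · rfl
    · rw [haa, add_comm]
    · exact heq
    · rw [haa, add_comm]; exact heq
  have hpa : p + a ≠ x := fun h => h2 (by rw [← h, haa])
  have hpax : p + a ≠ x + a := fun h => h1 (add_right_cancel h)
  have hxa : x ≠ x + a := fun h => ha (left_eq_add.mp h)
  have hppa : p ≠ p + a := fun h => ha (left_eq_add.mp h)
  have hcard4 : ({x, x + a, p, p + a} : Finset F).card = 4 := by
    rw [Finset.card_insert_of_notMem (by simp [hxa, h1.symm, hpa.symm]),
      Finset.card_insert_of_notMem (by simp [h2.symm, hpax.symm]),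
      Finset.card_insert_of_notMem (by simp [hppa]),
      Finset.card_singleton]
  calc 4 = ({x, x + a, p, p + a} : Finset F).card := hcard4.symm
    _ ≤ _ := Finset.card_le_card hsub

lemma roots_ne (z t β : F) (hz : z * z + z = t) (hβ : β * β + β ≠ t) :
    z ≠ β ∧ z ≠ β + 1 := by
  constructor
  · rintro rfl; exact hβ hz
  · rintro rfl
    apply hβ
    have h2 : ∀ y : F, y + y = 0 := CharTwo.add_self_eq_zero
    linear_combination hz - h2 β - h2 (1:F)


lemma tr_zero {n : ℕ} : Tr n (0:F) = 0 := by
  simp [Tr]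

lemma Fmod_eval (α x : F) (h0 : x ≠ 0) (hα : x ≠ α) : Fmod α x = x⁻¹ := by
  simp [Fmod, h0, hα]

lemma case0 {n : ℕ} (hn : 3 ≤ n) (hodd : Odd n) (hcard : Fintype.card F = 2 ^ n)
    (α : F) (hα : α ≠ 0) : ∃ a : F, a ≠ 0 ∧ 4 ≤ nabla (Fmod α) a 0 := by
  -- find t ≠ 0 with Tr t = 0
  have hT0card : 2 * (Finset.univ.filter fun z : F => Tr n z = 0).card = 2 ^ n :=
    tzero_card hodd hcard
  have h8 : (8:ℕ) ≤ 2 ^ n := by calc (8:ℕ) = 2^3 := rfl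
                                  _ ≤ 2^n := Nat.pow_le_pow_right (by norm_num) hn
  have hlt : 1 < (Finset.univ.filter fun z : F => Tr n z = 0).card := by omega
  obtain ⟨t, htmem, ht0⟩ := Finset.exists_mem_ne hlt 0
  have htr : Tr n t = 0 := (Finset.mem_filter.mp htmem).2
  obtain ⟨z, hz⟩ := as_solvable hodd hcard t htr
  have hz0 : z ≠ 0 := by rintro rfl; apply ht0; rw [← hz]; ring
  have hz1 : z ≠ 1 := by
    rintro rfl; apply ht0; rw [← hz]
    linear_combination CharTwo.add_self_eq_zero (1:F)
  have hq : z * z + z ≠ 0 := by rw [hz]; exact ht0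
  have hz1' : z + 1 ≠ 0 := fun h => hz1 (by linear_combination h - CharTwo.add_self_eq_zero (1:F))
  have hq1 : 1 + z * z + z ≠ 0 := by
    intro h
    have h1t : Tr n (1 + t) = 0 := by
      rw [← hz, show (1:F) + (z*z+z) = 1 + z*z+z by ring, h, tr_zero]
    rw [tr_add, tr_one hodd, htr, add_zero] at h1t
    exact one_ne_zero h1t
  set a : F := α * (1 + z * z + z) * (z * z + z)⁻¹ with ha_def
  have ha0 : a ≠ 0 := by
    apply mul_ne_zero (mul_ne_zero hα hq1)
    exact inv_ne_zero hq
  refine ⟨a, ha0, ?_⟩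
  set y : F := a * z with hy_def
  have hy0 : y ≠ 0 := mul_ne_zero ha0 hz0
  have hya0 : y + a ≠ 0 := by
    rw [hy_def, show a * z + a = a * (z + 1) by ring]
    exact mul_ne_zero ha0 hz1'
  have hyα : y ≠ α := by
    rw [hy_def, ha_def]
    intro h
    apply hz0
    field_simp at h
    have h3 : α * (z * z * z) = 0 := by linear_combination (α * z) * h
    rcases mul_eq_zero.mp h3 with h4 | h4
    · exact absurd h4 hα
    · rcases mul_eq_zero.mp h4 with h5 | h5
      · exact (mul_self_eq_zero.mp h5)
      · exact h5
  have hyaα : y + a ≠ α := by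
    rw [hy_def, ha_def]
    intro h
    apply hz1
    field_simp at h
    have h3 : α * ((z + 1) * (z + 1) * (z + 1)) = 0 := by
      linear_combination α * (z + 1) * h + α * (z + 1) * CharTwo.add_self_eq_zero z
    have h4 : z + 1 = 0 := by
      rcases mul_eq_zero.mp h3 with h4 | h4
      · exact absurd h4 hα
      · rcases mul_eq_zero.mp h4 with h5 | h5
        · exact mul_self_eq_zero.mp h5
        · exact h5
    exact absurd h4 hz1'
  have haα : a ≠ α := by
    rw [ha_def]
    intro h
    apply hα
    field_simp at h
    linear_combination α * h
  have hya : y ≠ a := by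
    rw [hy_def]
    intro h
    exact hz1 (mul_left_cancel₀ ha0 (h.trans (mul_one a).symm))
  apply four_le_nabla (Fmod α) a 0 y ha0 hy0 (by rwa [zero_add])
  have e1 : Fmod α y = y⁻¹ := Fmod_eval α y hy0 hyα
  have e2 : Fmod α (y + a) = (y + a)⁻¹ := Fmod_eval α (y + a) hya0 hyaα
  have e3 : Fmod α 0 = α⁻¹ := by simp [Fmod]
  have e4 : Fmod α (0 + a) = a⁻¹ := by rw [zero_add]; exact Fmod_eval α a ha0 haα
  rw [e1, e2, e3, e4]
  rw [inv_add_inv hy0 hya0, inv_add_inv hα ha0,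
    div_eq_div_iff (mul_ne_zero hy0 hya0) (mul_ne_zero hα ha0)]
  rw [hy_def, ha_def]
  field_simp
  ring_nf
  reduce_mod_char!


lemma caseAlpha {n : ℕ} (hn : 3 ≤ n) (hodd : Odd n) (hcard : Fintype.card F = 2 ^ n)
    (α : F) (hα : α ≠ 0) : ∃ a : F, a ≠ 0 ∧ 4 ≤ nabla (Fmod α) a α := by
  have hT1card : 2 * (Finset.univ.filter fun z : F => Tr n z = 1).card = 2 ^ n :=
    tone_card hodd hcard
  have h8 : (8:ℕ) ≤ 2 ^ n := by calc (8:ℕ) = 2^3 := rfl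
                                  _ ≤ 2^n := Nat.pow_le_pow_right (by norm_num) hn
  have hlt : 1 < (Finset.univ.filter fun z : F => Tr n z = 1).card := by omega
  obtain ⟨t, htmem, ht1⟩ := Finset.exists_mem_ne hlt 1
  have htr : Tr n t = 1 := (Finset.mem_filter.mp htmem).2
  have ht0 : t ≠ 0 := by rintro rfl; rw [tr_zero] at htr; exact zero_ne_one htr
  have htr0 : Tr n (1 + t) = 0 := by
    rw [tr_add, tr_one hodd, htr, CharTwo.add_self_eq_zero]
  obtain ⟨z, hz⟩ := as_solvable hodd hcard (1 + t) htr0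
  have ht_eq : t = 1 + z * z + z := by
    linear_combination - hz - CharTwo.add_self_eq_zero (1:F)
  have hq : 1 + z * z + z ≠ 0 := by rw [← ht_eq]; exact ht0
  have hz0 : z ≠ 0 := by rintro rfl; apply ht1; rw [ht_eq]; ring
  have hz1 : z ≠ 1 := by
    rintro rfl; apply ht1; rw [ht_eq]
    linear_combination CharTwo.add_self_eq_zero (1:F)
  have hz1' : z + 1 ≠ 0 := fun h => hz1 (by linear_combination h - CharTwo.add_self_eq_zero (1:F))
  have hzz : z * z + z ≠ 0 := by
    intro h
    rcases mul_eq_zero.mp (show z * (z + 1) = 0 by linear_combination h) with h' | h'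
    · exact hz0 h'
    · exact hz1' h'
  set a : F := α * (1 + z * z + z)⁻¹ with ha_def
  have ha0 : a ≠ 0 := mul_ne_zero hα (inv_ne_zero hq)
  refine ⟨a, ha0, ?_⟩
  set y : F := a * z with hy_def
  have hy0 : y ≠ 0 := mul_ne_zero ha0 hz0
  have hya0 : y + a ≠ 0 := by
    rw [hy_def, show a * z + a = a * (z + 1) by ring]
    exact mul_ne_zero ha0 hz1'
  have hαa : α + a = a * (z * z + z) := by
    rw [ha_def]
    linear_combination α * mul_inv_cancel₀ hq + CharTwo.add_self_eq_zero α
      - CharTwo.add_self_eq_zero (α * (1 + z * z + z)⁻¹ * (z * z + z))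
  have hαa0 : α + a ≠ 0 := by rw [hαa]; exact mul_ne_zero ha0 hzz
  have hyα : y ≠ α := by
    rw [hy_def, ha_def]
    intro h
    rw [mul_right_comm, mul_inv_eq_iff_eq_mul₀ hq, mul_eq_mul_left_iff] at h
    rcases h with h | h
    · apply hz1
      have h4 : (z + 1) * (z + 1) = 0 := by linear_combination -h + CharTwo.add_self_eq_zero z
      linear_combination mul_self_eq_zero.mp h4 - CharTwo.add_self_eq_zero (1:F)
    · exact hα h
  have hyaα : y + a ≠ α := by
    rw [hy_def, ha_def]
    intro h
    apply hz0
    have h3 : α * (z * z) = 0 := by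
      linear_combination -(1 + z * z + z) * h + α * (z + 1) * mul_inv_cancel₀ hq
    rcases mul_eq_zero.mp h3 with h4 | h4
    · exact absurd h4 hα
    · exact mul_self_eq_zero.mp h4
  have hyαa : y ≠ α + a := by
    rw [hαa, hy_def]
    intro h
    apply hz0
    have h2 := mul_left_cancel₀ ha0 h
    have h3 : z * z = 0 := by linear_combination - h2
    exact mul_self_eq_zero.mp h3
  apply four_le_nabla (Fmod α) a α y ha0 hyα hyαa
  have e1 : Fmod α y = y⁻¹ := Fmod_eval α y hy0 hyα
  have e2 : Fmod α (y + a) = (y + a)⁻¹ := Fmod_eval α (y + a) hya0 hyaα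
  have e3 : Fmod α α = 0 := by simp [Fmod, hα]
  have e4 : Fmod α (α + a) = (α + a)⁻¹ := by
    apply Fmod_eval α _ hαa0
    intro h
    exact ha0 (by linear_combination h)
  rw [e1, e2, e3, e4, zero_add]
  rw [inv_add_inv hy0 hya0, inv_eq_one_div, div_eq_div_iff (mul_ne_zero hy0 hya0) hαa0]
  rw [hαa, hy_def]
  linear_combination (a * (z * z + z)) * CharTwo.add_self_eq_zero (a * z)


lemma caseGen {n : ℕ} (hn : 3 ≤ n) (hodd : Odd n) (hcard : Fintype.card F = 2 ^ n)
    (α : F) (hα : α ≠ 0) (x : F) (hx0 : x ≠ 0) (hxα : x ≠ α) :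
    ∃ a : F, a ≠ 0 ∧ 4 ≤ nabla (Fmod α) a x := by
  have hax0 : α + x ≠ 0 := fun h => hxα (by linear_combination - h + CharTwo.add_self_eq_zero x)
  have hxa0' : x + α ≠ 0 := fun h => hxα (by linear_combination - h + CharTwo.add_self_eq_zero x)
  set t₀ : F := α * (α + x)⁻¹ with ht₀_def
  have ht₀0 : t₀ ≠ 0 := mul_ne_zero hα (inv_ne_zero hax0)
  rcases tr_val hcard t₀ with htr | htr
  · -- Branch C : flat {0, a, x, x+a}
    obtain ⟨z, hz⟩ := as_solvable hodd hcard t₀ htr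
    have hkey : (z * z + z) * (α + x) = α := by
      rw [hz, ht₀_def]; field_simp
    have hz0 : z ≠ 0 := by rintro rfl; apply hα; rw [← hkey]; ring
    have hz1 : z ≠ 1 := by
      rintro rfl; apply hα; rw [← hkey]
      linear_combination (α + x) * CharTwo.add_self_eq_zero (1:F)
    have hz1' : z + 1 ≠ 0 := fun h => hz1 (by linear_combination h - CharTwo.add_self_eq_zero (1:F))
    have hβ : α * x⁻¹ * (α * x⁻¹) + α * x⁻¹ ≠ t₀ := by
      intro h
      rw [ht₀_def] at h
      field_simp at h
      apply hα
      have h3 : α * (α * (α * x)) = 0 := by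
        linear_combination (α * x) * h - CharTwo.add_self_eq_zero (α * α * (x * x))
      rcases mul_eq_zero.mp h3 with h4 | h4
      · exact h4
      · rcases mul_eq_zero.mp h4 with h5 | h5
        · exact h5
        · rcases mul_eq_zero.mp h5 with h6 | h6
          · exact h6
          · exact absurd h6 hx0
    obtain ⟨hzβ, hzβ1⟩ := roots_ne z t₀ (α * x⁻¹) hz hβ
    set a : F := x * z with ha_def
    have ha0 : a ≠ 0 := mul_ne_zero hx0 hz0
    refine ⟨a, ha0, ?_⟩
    have hxa : x + a ≠ 0 := by
      rw [ha_def, show x + x * z = x * (1 + z) by ring]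
      exact mul_ne_zero hx0 (fun h => hz1' (by linear_combination h))
    have haα : a ≠ α := by
      rw [ha_def]
      intro h
      apply hzβ
      field_simp
      linear_combination h
    have hxaα : x + a ≠ α := by
      rw [ha_def]
      intro h
      apply hzβ1
      field_simp
      linear_combination h - CharTwo.add_self_eq_zero x
    apply four_le_nabla (Fmod α) a x 0 ha0 (Ne.symm hx0) (Ne.symm hxa)
    have e1 : Fmod α 0 = α⁻¹ := by simp [Fmod]
    have e2 : Fmod α (0 + a) = a⁻¹ := by rw [zero_add]; exact Fmod_eval α a ha0 haα
    have e3 : Fmod α x = x⁻¹ := Fmod_eval α x hx0 hxα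
    have e4 : Fmod α (x + a) = (x + a)⁻¹ := Fmod_eval α (x + a) hxa hxaα
    rw [e1, e2, e3, e4]
    rw [inv_add_inv hα ha0, inv_add_inv hx0 hxa,
      div_eq_div_iff (mul_ne_zero hα ha0) (mul_ne_zero hx0 hxa)]
    rw [ha_def]
    linear_combination (-(x*x)) * hkey + CharTwo.add_self_eq_zero (x*x*x*z)
      + CharTwo.add_self_eq_zero (x*x*x*z*z)
  · -- Branch D : flat {α, α+a, x, x+a}
    set s : F := x * (x + α)⁻¹ with hs_def
    have hs0 : s ≠ 0 := mul_ne_zero hx0 (inv_ne_zero hxa0')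
    have hs_eq : s = 1 + t₀ := by
      rw [hs_def, ht₀_def]
      field_simp
      ring_nf
      reduce_mod_char!
    have htrs : Tr n (s * s) = 0 := by
      rw [tr_sq hcard, hs_eq, tr_add, tr_one hodd, htr, CharTwo.add_self_eq_zero]
    obtain ⟨z, hz⟩ := as_solvable hodd hcard (s * s) htrs
    have hkey : (z * z + z) * ((x + α) * (x + α)) = x * x := by
      rw [hz, hs_def]; field_simp; try ring
    have hz0 : z ≠ 0 := by
      rintro rfl
      apply hx0
      apply mul_self_eq_zero.mp
      rw [← hkey]; ring
    have hz1 : z ≠ 1 := by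
      rintro rfl
      apply hx0
      apply mul_self_eq_zero.mp
      rw [← hkey]
      linear_combination ((x+α)*(x+α)) * CharTwo.add_self_eq_zero (1:F)
    have hβ : s * s + s ≠ s * s := fun h => hs0 (by linear_combination h)
    obtain ⟨hzs, hzs1⟩ := roots_ne z (s * s) s hz hβ
    set a : F := (x + α) * z with ha_def
    have ha0 : a ≠ 0 := mul_ne_zero hxa0' hz0
    refine ⟨a, ha0, ?_⟩
    have hxa : x + a ≠ 0 := by
      rw [ha_def]
      intro h
      apply hzs
      rw [hs_def]
      field_simp
      linear_combination h - CharTwo.add_self_eq_zero x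
    have hxaα : x + a ≠ α := by
      rw [ha_def]
      intro h
      apply hz1
      apply mul_left_cancel₀ hxa0'
      rw [mul_one]
      linear_combination h - CharTwo.add_self_eq_zero x
    have hαa0 : α + a ≠ 0 := by
      rw [ha_def]
      intro h
      apply hzs1
      rw [hs_def]
      field_simp
      linear_combination h - CharTwo.add_self_eq_zero x - CharTwo.add_self_eq_zero α
    have hαaα : α + a ≠ α := fun h => ha0 (by linear_combination h)
    apply four_le_nabla (Fmod α) a x α ha0 (Ne.symm hxα) (Ne.symm hxaα)
    have e1 : Fmod α α = 0 := by simp [Fmod, hα]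
    have e2 : Fmod α (α + a) = (α + a)⁻¹ := Fmod_eval α (α + a) hαa0 hαaα
    have e3 : Fmod α x = x⁻¹ := Fmod_eval α x hx0 hxα
    have e4 : Fmod α (x + a) = (x + a)⁻¹ := Fmod_eval α (x + a) hxa hxaα
    rw [e1, e2, e3, e4, zero_add]
    rw [inv_add_inv hx0 hxa, inv_eq_one_div,
      div_eq_div_iff hαa0 (mul_ne_zero hx0 hxa)]
    rw [ha_def]
    linear_combination (-1 : F) * hkey - CharTwo.add_self_eq_zero (x*α)

end Main

end Aux

/-- for odd `n ≥ 3` the column spectrum of `F_{0,α}` is empty. -/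
theorem stmt_8 (n : ℕ) (hn : 3 ≤ n) (hodd : Odd n)
    [CharP F 2] (hcard : Fintype.card F = 2 ^ n)
    (α : F) (hα : α ≠ 0) :
    (∀ x : F, ∃ a : F, a ≠ 0 ∧ 4 ≤ nabla (Fmod α) a x) ∧
    {x : F | ∀ a : F, a ≠ 0 → nabla (Fmod α) a x = 2} = ∅ := by
  have main : ∀ x : F, ∃ a : F, a ≠ 0 ∧ 4 ≤ nabla (Fmod α) a x := by
    intro x
    by_cases hx0 : x = 0
    · subst hx0; exact case0 hn hodd hcard α hα
    by_cases hxα : x = α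
    · subst hxα; exact caseAlpha hn hodd hcard x hα
    exact caseGen hn hodd hcard α hα x hx0 hxα
  refine ⟨main, ?_⟩
  rw [Set.eq_empty_iff_forall_notMem]
  intro x hx
  obtain ⟨a, ha, h4⟩ := main x
  have h2 := hx a ha
  omega


end APNPaper
end
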